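/- arXiv:2201.09713 — 6 statements merged into one kernel-verified Lean document; each statement's English description precedes it below -/
import Mathlib

section
/- Let U ⊂ ℝ^N be a bounded open set and F ∈ L¹(U;ℝ^N) an L¹-divergence-measure field with divergence measure μ. For any bounded Lipschitz function g : ℝ^N → ℝ define T(g) = ∫_U ∇g(x)·F(x) dx + ∫_U g(x) dμ(x). Then T(g) depends only on the restriction of g to ∂U: if g₁, g₂ are bounded Lipschitz functions on ℝ^N with g₁ = g₂ on ∂U, then T(g₁) = T(g₂). Moreover, |T(g)| ≤ ( ‖F‖_{L¹(U;ℝ^N)} + |μ|(U) ) · ( sup_{x∈∂U} |g(x)| + Lip(g|_{∂U}) ), where Lip(g|_{∂U}) is the Lipschitz constant of the restriction of g to ∂U and |μ| is the total variation measure of μ. -/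
open MeasureTheory Filter Topology NNReal Metric Convolution

noncomputable section

namespace DMF

/-- The integral `∫_U g dμ` of a function against a signed measure, via the Jordan
decomposition `μ = μ⁺ − μ⁻`. -/
def sintegralOn {E : Type*} [MeasurableSpace E] (μ : MeasureTheory.SignedMeasure E)
    (U : Set E) (g : E → ℝ) : ℝ :=
  (∫ x in U, g x ∂μ.toJordanDecomposition.posPart) -
    ∫ x in U, g x ∂μ.toJordanDecomposition.negPart

/-- The generalized Gauss–Green functional `T(g) = ∫_U ∇g·F dx + ∫_U g dμ`. -/
def gaussGreen {N : ℕ} (U : Set (EuclideanSpace ℝ (Fin N)))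
    (F : EuclideanSpace ℝ (Fin N) → EuclideanSpace ℝ (Fin N))
    (μ : MeasureTheory.SignedMeasure (EuclideanSpace ℝ (Fin N)))
    (g : EuclideanSpace ℝ (Fin N) → ℝ) : ℝ :=
  (∫ x in U, fderiv ℝ g x (F x)) + sintegralOn μ U g

/-- The Lipschitz constant of the restriction of `g` to a set `Γ`. -/
def lipConstOn {N : ℕ} (Γ : Set (EuclideanSpace ℝ (Fin N)))
    (g : EuclideanSpace ℝ (Fin N) → ℝ) : ℝ :=
  sInf {c : ℝ | 0 ≤ c ∧ ∀ x ∈ Γ, ∀ y ∈ Γ, |g x - g y| ≤ c * ‖x - y‖}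

variable {N : ℕ}

lemma aesm_clm_apply {α : Type*} [MeasurableSpace α] {ν : Measure α}
    {Φ : α → (EuclideanSpace ℝ (Fin N) →L[ℝ] ℝ)} {F : α → EuclideanSpace ℝ (Fin N)}
    (hΦ : AEStronglyMeasurable Φ ν) (hF : AEStronglyMeasurable F ν) :
    AEStronglyMeasurable (fun x => Φ x (F x)) ν :=
  isBoundedBilinearMap_apply.continuous.comp_aestronglyMeasurable (hΦ.prodMk hF)

lemma integrableOn_fderiv_apply {U : Set (EuclideanSpace ℝ (Fin N))}
    {F : EuclideanSpace ℝ (Fin N) → EuclideanSpace ℝ (Fin N)} (hF : IntegrableOn F U)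
    {g : EuclideanSpace ℝ (Fin N) → ℝ} {c : ℝ≥0} (hg : LipschitzWith c g) :
    IntegrableOn (fun x => fderiv ℝ g x (F x)) U := by
  have hm : AEStronglyMeasurable (fun x => fderiv ℝ g x (F x)) (volume.restrict U) :=
    aesm_clm_apply ((measurable_fderiv ℝ g).stronglyMeasurable.aestronglyMeasurable) hF.1
  refine (hF.norm.const_mul (c : ℝ)).mono' hm ?_
  filter_upwards with x
  calc ‖fderiv ℝ g x (F x)‖ ≤ ‖fderiv ℝ g x‖ * ‖F x‖ := (fderiv ℝ g x).le_opNorm _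
  _ ≤ (c : ℝ) * ‖F x‖ := by
      gcongr; exact norm_fderiv_le_of_lipschitz ℝ hg

lemma tendsto_seq_deriv {f : EuclideanSpace ℝ (Fin N) → ℝ} {y v : EuclideanSpace ℝ (Fin N)}
    (hf : DifferentiableAt ℝ f y) :
    Tendsto (fun k : ℕ => ((k : ℝ) + 1) * (f (y + ((k : ℝ) + 1)⁻¹ • v) - f y)) atTop
      (𝓝 (fderiv ℝ f y v)) := by
  have hline : HasDerivAt (fun t : ℝ => y + t • v) v 0 := by
    simpa using ((hasDerivAt_id (0:ℝ)).smul_const v).const_add y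
  have hD : HasDerivAt (fun t : ℝ => f (y + t • v)) (fderiv ℝ f y v) 0 := by
    have h0 : HasFDerivAt f (fderiv ℝ f y) (y + (0:ℝ) • v) := by
      simpa using hf.hasFDerivAt
    exact h0.comp_hasDerivAt 0 hline
  have hslope := hasDerivAt_iff_tendsto_slope.1 hD
  have hseq : Tendsto (fun k : ℕ => ((k : ℝ) + 1)⁻¹) atTop (𝓝[≠] (0:ℝ)) := by
    apply tendsto_nhdsWithin_of_tendsto_nhds_of_eventually_within
    · simpa using tendsto_one_div_add_atTop_nhds_zero_nat (𝕜 := ℝ)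
    · filter_upwards with k
      simp only [Set.mem_compl_iff, Set.mem_singleton_iff]
      positivity
  refine (hslope.comp hseq).congr fun k => ?_
  simp only [Function.comp, slope_def_field, sub_zero, zero_smul, add_zero]
  rw [div_eq_inv_mul, inv_inv]

/-- Lipschitz difference quotient bound. -/
lemma lip_quot {u : EuclideanSpace ℝ (Fin N) → ℝ} {c : ℝ≥0} (hu : LipschitzWith c u)
    (y v : EuclideanSpace ℝ (Fin N)) (k : ℕ) :
    |((k : ℝ) + 1) * (u (y + ((k : ℝ) + 1)⁻¹ • v) - u y)| ≤ (c : ℝ) * ‖v‖ := by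
  have hk : (0:ℝ) < (k : ℝ) + 1 := by positivity
  have h1 : |u (y + ((k : ℝ) + 1)⁻¹ • v) - u y| ≤ (c : ℝ) * (((k : ℝ) + 1)⁻¹ * ‖v‖) := by
    have := hu.dist_le_mul (y + ((k : ℝ) + 1)⁻¹ • v) y
    rw [Real.dist_eq, dist_eq_norm] at this
    have h2 : y + ((k : ℝ) + 1)⁻¹ • v - y = ((k : ℝ) + 1)⁻¹ • v := by abel
    rw [h2, norm_smul, Real.norm_eq_abs, abs_of_pos (inv_pos.2 hk)] at this
    simpa [mul_assoc] using this
  rw [abs_mul, abs_of_pos hk]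
  calc ((k : ℝ) + 1) * |u (y + ((k : ℝ) + 1)⁻¹ • v) - u y|
      ≤ ((k : ℝ) + 1) * ((c : ℝ) * (((k : ℝ) + 1)⁻¹ * ‖v‖)) := by
        exact mul_le_mul_of_nonneg_left h1 hk.le
  _ = (c : ℝ) * ‖v‖ := by field_simp

set_option maxHeartbeats 2000000 in
/-- **Core lemma**: the distributional divergence identity extends from `C¹_c` test
functions to compactly supported Lipschitz functions, by mollification. -/
lemma divergence_lipschitz {U : Set (EuclideanSpace ℝ (Fin N))} (hUopen : IsOpen U)
    {F : EuclideanSpace ℝ (Fin N) → EuclideanSpace ℝ (Fin N)} (hF : IntegrableOn F U)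
    {μ : MeasureTheory.SignedMeasure (EuclideanSpace ℝ (Fin N))}
    (hdiv : ∀ φ : EuclideanSpace ℝ (Fin N) → ℝ,
      ContDiff ℝ 1 φ → HasCompactSupport φ → tsupport φ ⊆ U →
      ∫ x in U, fderiv ℝ φ x (F x) = -sintegralOn μ U φ)
    {u : EuclideanSpace ℝ (Fin N) → ℝ} {c : ℝ≥0} (hu : LipschitzWith c u)
    (hcs : HasCompactSupport u) (hsupp : tsupport u ⊆ U) :
    ∫ x in U, fderiv ℝ u x (F x) = -sintegralOn μ U u := by
  classical
  obtain ⟨δ, δpos, hδU⟩ : ∃ δ > 0, Metric.thickening δ (tsupport u) ⊆ U :=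
    hcs.exists_thickening_subset_open hUopen hsupp
  obtain ⟨B, hB⟩ : ∃ B, ∀ x, ‖u x‖ ≤ B := hcs.exists_bound_of_continuous hu.continuous
  set ρb : ℕ → ContDiffBump (0 : EuclideanSpace ℝ (Fin N)) := fun n =>
    ⟨δ / (4 * ((n : ℝ) + 1)), δ / (2 * ((n : ℝ) + 1)), by positivity,
      by
        apply div_lt_div_of_pos_left δpos (by positivity)
        nlinarith [Nat.cast_nonneg (α := ℝ) n]⟩ with hρb
  set ρ : ℕ → EuclideanSpace ℝ (Fin N) → ℝ := fun n => (ρb n).normed volume with hρ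
  set ψ : ℕ → EuclideanSpace ℝ (Fin N) → ℝ :=
    fun n => (ρ n) ⋆[ContinuousLinearMap.lsmul ℝ ℝ, volume] u with hψ
  set W : EuclideanSpace ℝ (Fin N) → (EuclideanSpace ℝ (Fin N) →L[ℝ] ℝ) := fderiv ℝ u with hW
  -- basic facts about ρ
  have hρint : ∀ n, Integrable (ρ n) volume := fun n => (ρb n).integrable_normed
  have hρcont : ∀ n, Continuous (ρ n) := fun n => (ρb n).continuous_normed
  have hρnonneg : ∀ n t, 0 ≤ ρ n t := fun n t => (ρb n).nonneg_normed t
  have hρone : ∀ n, ∫ t, ρ n t = 1 := fun n => (ρb n).integral_normed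
  -- smoothness
  have hψc1 : ∀ n, ContDiff ℝ 1 (ψ n) := fun n =>
    ((ρb n).hasCompactSupport_normed).contDiff_convolution_left _
      ((ρb n).contDiff_normed) hu.continuous.locallyIntegrable
  -- support
  have hψsupp : ∀ n, tsupport (ψ n) ⊆ Metric.cthickening (δ / 2) (tsupport u) := by
    intro n
    have h1 : Function.support (ψ n) ⊆ Metric.thickening (δ / 2) (tsupport u) := by
      simp only [hψ]
      refine (support_convolution_subset _).trans ?_
      rintro x ⟨a, ha, b, hb, rfl⟩
      have ha' : ‖a‖ < δ / (2 * ((n : ℝ) + 1)) := by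
        have : a ∈ Metric.ball (0 : EuclideanSpace ℝ (Fin N)) (ρb n).rOut := by
          rw [← (ρb n).support_normed_eq (μ := volume)]; exact ha
        simpa [mem_ball, dist_eq_norm] using this
      have hle : δ / (2 * ((n : ℝ) + 1)) ≤ δ / 2 := by
        apply div_le_div_of_nonneg_left δpos.le (by norm_num)
        nlinarith [Nat.cast_nonneg (α := ℝ) n]
      rw [Metric.mem_thickening_iff]
      refine ⟨b, subset_closure hb, ?_⟩
      rw [dist_eq_norm]
      calc ‖a + b - b‖ = ‖a‖ := by rw [add_sub_cancel_right]
      _ < δ / 2 := lt_of_lt_of_le ha' hle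
    exact closure_minimal (h1.trans (Metric.thickening_subset_cthickening _ _))
      Metric.isClosed_cthickening
  have hcthU : Metric.cthickening (δ / 2) (tsupport u) ⊆ U :=
    (Metric.cthickening_subset_thickening' δpos (by linarith) _).trans hδU
  have hψU : ∀ n, tsupport (ψ n) ⊆ U := fun n => (hψsupp n).trans hcthU
  have hψcs : ∀ n, HasCompactSupport (ψ n) := fun n =>
    (hcs.cthickening).of_isClosed_subset (isClosed_tsupport _) (hψsupp n)
  -- facts about W
  have hWm : AEStronglyMeasurable W volume :=
    (measurable_fderiv ℝ u).stronglyMeasurable.aestronglyMeasurable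
  have hWle : ∀ y, ‖W y‖ ≤ (c : ℝ) := fun y => norm_fderiv_le_of_lipschitz ℝ hu
  have hWloc : LocallyIntegrable W volume := by
    intro x
    refine ⟨Metric.closedBall x 1, Metric.closedBall_mem_nhds x one_pos, ?_⟩
    exact Measure.integrableOn_of_bounded (measure_closedBall_lt_top).ne
      hWm (Eventually.of_forall fun y => hWle y)
  -- key derivative identity
  have hψd : ∀ n, Differentiable ℝ (ψ n) := fun n =>
    (hψc1 n).differentiable one_ne_zero
  have hmeasW' : ∀ x : EuclideanSpace ℝ (Fin N),
      AEStronglyMeasurable (fun t => W (x - t)) volume := by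
    intro x
    exact ((measurable_fderiv ℝ u).comp (measurable_const.sub measurable_id)
      ).stronglyMeasurable.aestronglyMeasurable
  have hIu : ∀ n (y : EuclideanSpace ℝ (Fin N)),
      Integrable (fun t => ρ n t * u (y - t)) volume := by
    intro n y
    have := (hρint n).bdd_mul
      ((hu.continuous.comp (continuous_const.sub continuous_id)).aestronglyMeasurable)
      (c := B) (Eventually.of_forall fun t => hB (y - t))
    simpa [mul_comm] using this
  have hψeval : ∀ n (y : EuclideanSpace ℝ (Fin N)), ψ n y = ∫ t, ρ n t * u (y - t) := by
    intro n y
    simp [hψ, convolution_def, ContinuousLinearMap.lsmul_apply, smul_eq_mul]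
  have hrad : ∀ (x : EuclideanSpace ℝ (Fin N)), ∀ᵐ t : EuclideanSpace ℝ (Fin N),
      DifferentiableAt ℝ u (x - t) := by
    intro x
    have h0 : ∀ᵐ y : EuclideanSpace ℝ (Fin N), DifferentiableAt ℝ u y :=
      hu.ae_differentiableAt
    have hqmp := quasiMeasurePreserving_sub_left_of_right_invariant
      (volume : Measure (EuclideanSpace ℝ (Fin N))) x
    rw [ae_iff] at h0 ⊢
    exact hqmp.preimage_null h0
  have hkey : ∀ n x (v : EuclideanSpace ℝ (Fin N)),
      fderiv ℝ (ψ n) x v = ∫ t, ρ n t * W (x - t) v := by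
    intro n x v
    have h1 := tendsto_seq_deriv (v := v) ((hψd n) x)
    have hrep : ∀ k : ℕ, ((k : ℝ) + 1) * (ψ n (x + ((k : ℝ) + 1)⁻¹ • v) - ψ n x)
        = ∫ t, ρ n t * (((k : ℝ) + 1) * (u ((x - t) + ((k : ℝ) + 1)⁻¹ • v) - u (x - t))) := by
      intro k
      rw [hψeval n _, hψeval n x, ← integral_sub (hIu n _) (hIu n x), ← integral_const_mul]
      congr 1; funext t
      have harg : x + ((k : ℝ) + 1)⁻¹ • v - t = (x - t) + ((k : ℝ) + 1)⁻¹ • v := by abel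
      rw [harg]; ring
    have h2 : Tendsto (fun k : ℕ => ((k : ℝ) + 1) * (ψ n (x + ((k : ℝ) + 1)⁻¹ • v) - ψ n x))
        atTop (𝓝 (∫ t, ρ n t * W (x - t) v)) := by
      rw [funext hrep]
      refine tendsto_integral_of_dominated_convergence
        (fun t => ρ n t * ((c : ℝ) * ‖v‖)) ?_ ?_ ?_ ?_
      · intro k
        exact ((hρcont n).mul (continuous_const.mul
          ((hu.continuous.comp ((continuous_const.sub continuous_id).add continuous_const)).sub
            (hu.continuous.comp (continuous_const.sub continuous_id))))).aestronglyMeasurable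
      · exact (hρint n).mul_const _
      · intro k
        refine Eventually.of_forall fun t => ?_
        rw [Real.norm_eq_abs, abs_mul, abs_of_nonneg (hρnonneg n t)]
        exact mul_le_mul_of_nonneg_left (lip_quot hu (x - t) v k) (hρnonneg n t)
      · filter_upwards [hrad x] with t ht
        exact (tendsto_seq_deriv ht).const_mul (ρ n t)
    exact tendsto_nhds_unique h1 h2
  -- convolution form of the derivative
  set Wc : ℕ → EuclideanSpace ℝ (Fin N) → (EuclideanSpace ℝ (Fin N) →L[ℝ] ℝ) :=
    fun n => (ρ n) ⋆[(ContinuousLinearMap.lsmul ℝ ℝ : ℝ →L[ℝ]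
      (EuclideanSpace ℝ (Fin N) →L[ℝ] ℝ) →L[ℝ] (EuclideanSpace ℝ (Fin N) →L[ℝ] ℝ)), volume] W
    with hWc
  have hWcint : ∀ n x, Integrable (fun t => ρ n t • W (x - t)) volume := by
    intro n x
    have hsm : AEStronglyMeasurable (fun t => ρ n t • W (x - t)) volume :=
      ((hρcont n).stronglyMeasurable.smul
        (((measurable_fderiv ℝ u).comp
          (measurable_const.sub measurable_id)).stronglyMeasurable)).aestronglyMeasurable
    refine ((hρint n).mul_const (c : ℝ)).mono' hsm ?_
    refine Eventually.of_forall fun t => ?_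
    calc ‖ρ n t • W (x - t)‖ ≤ ‖ρ n t‖ * ‖W (x - t)‖ := ContinuousLinearMap.opNorm_smul_le _ _
    _ = ρ n t * ‖W (x - t)‖ := by rw [Real.norm_eq_abs, abs_of_nonneg (hρnonneg n t)]
    _ ≤ ρ n t * (c : ℝ) := mul_le_mul_of_nonneg_left (hWle (x - t)) (hρnonneg n t)
  have hWceval : ∀ n x, Wc n x = ∫ t, ρ n t • W (x - t) := by
    intro n x
    simp [hWc, convolution_def, ContinuousLinearMap.lsmul_apply]
  have hψW : ∀ n x, fderiv ℝ (ψ n) x = Wc n x := by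
    intro n x
    refine ContinuousLinearMap.ext fun v => ?_
    rw [hkey n x v, hWceval n x, ContinuousLinearMap.integral_apply (hWcint n x) v]
    congr 1
  have hWcle : ∀ n x, ‖Wc n x‖ ≤ (c : ℝ) := by
    intro n x
    rw [hWceval n x]
    calc ‖∫ t, ρ n t • W (x - t)‖ ≤ ∫ t, ρ n t * (c : ℝ) := by
          refine norm_integral_le_of_norm_le ((hρint n).mul_const _) ?_
          refine Eventually.of_forall fun t => ?_
          calc ‖ρ n t • W (x - t)‖ ≤ ‖ρ n t‖ * ‖W (x - t)‖ := ContinuousLinearMap.opNorm_smul_le _ _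
          _ = ρ n t * ‖W (x - t)‖ := by rw [Real.norm_eq_abs, abs_of_nonneg (hρnonneg n t)]
          _ ≤ ρ n t * (c : ℝ) := mul_le_mul_of_nonneg_left (hWle (x - t)) (hρnonneg n t)
    _ = (c : ℝ) := by rw [integral_mul_const, hρone n, one_mul]
  -- radii tend to zero
  have hrout : Tendsto (fun n : ℕ => (ρb n).rOut) atTop (𝓝 0) := by
    have he : (fun n : ℕ => (ρb n).rOut) = fun n : ℕ => (δ / 2) * (1 / ((n : ℝ) + 1)) := by
      funext n
      show δ / (2 * ((n : ℝ) + 1)) = (δ / 2) * (1 / ((n : ℝ) + 1))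
      have hn : ((n : ℝ) + 1) ≠ 0 := by positivity
      field_simp
    rw [he]
    simpa using tendsto_one_div_add_atTop_nhds_zero_nat (𝕜 := ℝ).const_mul (δ / 2)
  -- a.e. convergence of mollified derivatives
  have haec : ∀ᵐ x : EuclideanSpace ℝ (Fin N), Tendsto (fun n => Wc n x) atTop (𝓝 (W x)) := by
    refine ContDiffBump.ae_convolution_tendsto_right_of_locallyIntegrable (K := 2)
      hrout ?_ hWloc
    refine Eventually.of_forall fun n => ?_
    show δ / (2 * ((n : ℝ) + 1)) ≤ 2 * (δ / (4 * ((n : ℝ) + 1)))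
    have hn : (0:ℝ) < (n : ℝ) + 1 := by positivity
    have he2 : 2 * (δ / (4 * ((n : ℝ) + 1))) = δ / (2 * ((n : ℝ) + 1)) := by
      field_simp; ring
    rw [he2]
  -- limit of the field integrals
  have hWccont : ∀ n, Continuous (Wc n) := fun n =>
    ((ρb n).hasCompactSupport_normed).continuous_convolution_left _ (hρcont n) hWloc
  have hlim1 : Tendsto (fun n => ∫ x in U, fderiv ℝ (ψ n) x (F x)) atTop
      (𝓝 (∫ x in U, fderiv ℝ u x (F x))) := by
    have hre : ∀ n, ∫ x in U, fderiv ℝ (ψ n) x (F x) = ∫ x in U, Wc n x (F x) := by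
      intro n; congr 1; funext x; rw [hψW n x]
    simp only [hre]
    refine tendsto_integral_of_dominated_convergence (fun x => (c : ℝ) * ‖F x‖) ?_ ?_ ?_ ?_
    · intro n
      exact aesm_clm_apply ((hWccont n).aestronglyMeasurable) hF.1
    · exact hF.norm.const_mul _
    · intro n
      refine Eventually.of_forall fun x => ?_
      calc ‖Wc n x (F x)‖ ≤ ‖Wc n x‖ * ‖F x‖ := (Wc n x).le_opNorm _
      _ ≤ (c : ℝ) * ‖F x‖ := by gcongr; exact hWcle n x
    · refine ae_restrict_of_ae ?_
      filter_upwards [haec] with x hx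
      exact (isBoundedBilinearMap_apply.continuous.tendsto (W x, F x)).comp
        (hx.prodMk_nhds tendsto_const_nhds)
  -- limit of the signed-measure integrals
  have hψtend : ∀ x, Tendsto (fun n => ψ n x) atTop (𝓝 (u x)) := fun x =>
    ContDiffBump.convolution_tendsto_right_of_continuous hrout hu.continuous x
  have hψbd : ∀ n x, ‖ψ n x‖ ≤ B := by
    intro n x
    rw [hψeval n x]
    calc ‖∫ t, ρ n t * u (x - t)‖ ≤ ∫ t, ρ n t * B := by
          refine norm_integral_le_of_norm_le ((hρint n).mul_const _) ?_
          refine Eventually.of_forall fun t => ?_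
          rw [Real.norm_eq_abs, abs_mul, abs_of_nonneg (hρnonneg n t)]
          exact mul_le_mul_of_nonneg_left (hB _) (hρnonneg n t)
    _ = B := by rw [integral_mul_const, hρone n, one_mul]
  have hsintl : Tendsto (fun n => sintegralOn μ U (ψ n)) atTop (𝓝 (sintegralOn μ U u)) := by
    have hpos : Tendsto (fun n => ∫ x in U, ψ n x ∂μ.toJordanDecomposition.posPart) atTop
        (𝓝 (∫ x in U, u x ∂μ.toJordanDecomposition.posPart)) := by
      refine tendsto_integral_of_dominated_convergence (fun _ => B) ?_ ?_ ?_ ?_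
      · intro n; exact ((hψc1 n).continuous).aestronglyMeasurable
      · exact integrable_const B
      · intro n; exact Eventually.of_forall fun x => hψbd n x
      · exact Eventually.of_forall fun x => hψtend x
    have hneg : Tendsto (fun n => ∫ x in U, ψ n x ∂μ.toJordanDecomposition.negPart) atTop
        (𝓝 (∫ x in U, u x ∂μ.toJordanDecomposition.negPart)) := by
      refine tendsto_integral_of_dominated_convergence (fun _ => B) ?_ ?_ ?_ ?_
      · intro n; exact ((hψc1 n).continuous).aestronglyMeasurable
      · exact integrable_const B
      · intro n; exact Eventually.of_forall fun x => hψbd n x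
      · exact Eventually.of_forall fun x => hψtend x
    exact hpos.sub hneg
  -- conclude
  have heq : ∀ n, ∫ x in U, fderiv ℝ (ψ n) x (F x) = -sintegralOn μ U (ψ n) := fun n =>
    hdiv (ψ n) (hψc1 n) (hψcs n) (hψU n)
  have hlim2 : Tendsto (fun n => ∫ x in U, fderiv ℝ (ψ n) x (F x)) atTop
      (𝓝 (-sintegralOn μ U u)) := by
    simp only [heq]
    exact hsintl.neg
  exact tendsto_nhds_unique hlim1 hlim2

set_option maxHeartbeats 1000000 in
/-- The Gauss–Green functional vanishes on bounded Lipschitz functions that vanish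
on the frontier of `U`. -/
lemma gaussGreen_zero {U : Set (EuclideanSpace ℝ (Fin N))} (hUopen : IsOpen U)
    (hUbdd : Bornology.IsBounded U)
    {F : EuclideanSpace ℝ (Fin N) → EuclideanSpace ℝ (Fin N)} (hF : IntegrableOn F U)
    {μ : MeasureTheory.SignedMeasure (EuclideanSpace ℝ (Fin N))}
    (hdiv : ∀ φ : EuclideanSpace ℝ (Fin N) → ℝ,
      ContDiff ℝ 1 φ → HasCompactSupport φ → tsupport φ ⊆ U →
      ∫ x in U, fderiv ℝ φ x (F x) = -sintegralOn μ U φ)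
    {h : EuclideanSpace ℝ (Fin N) → ℝ} {c : ℝ≥0} (hh : LipschitzWith c h)
    {C : ℝ} (hbd : ∀ x, |h x| ≤ C) (h0 : ∀ x ∈ frontier U, h x = 0) :
    (∫ x in U, fderiv ℝ h x (F x)) + sintegralOn μ U h = 0 := by
  classical
  rcases Set.eq_empty_or_nonempty U with hUe | hUne
  · rw [hUe]
    simp [sintegralOn]
  rcases eq_or_ne U Set.univ with hUu | hUne'
  · -- the whole space is bounded, hence compact; apply the core lemma directly
    subst hUu
    have hcompact : IsCompact (Set.univ : Set (EuclideanSpace ℝ (Fin N))) :=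
      Metric.isCompact_of_isClosed_isBounded isClosed_univ hUbdd
    have hcs : HasCompactSupport h :=
      hcompact.of_isClosed_subset (isClosed_tsupport h) (Set.subset_univ _)
    have := divergence_lipschitz hUopen hF hdiv hh hcs (Set.subset_univ _)
    linarith
  -- main case
  set d : EuclideanSpace ℝ (Fin N) → ℝ := fun x => Metric.infDist x Uᶜ with hd
  have hdlip : LipschitzWith 1 d := Metric.lipschitz_infDist_pt _
  have hUc_ne : (Uᶜ : Set (EuclideanSpace ℝ (Fin N))).Nonempty := by
    rw [Set.nonempty_compl]; exact hUne'
  have hd0 : ∀ x ∉ U, d x = 0 := fun x hx => Metric.infDist_zero_of_mem hx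
  have hdpos : ∀ x ∈ U, 0 < d x := by
    intro x hx
    exact (hUopen.isClosed_compl.notMem_iff_infDist_pos hUc_ne).mp (by simpa using hx)
  -- pointwise bound |h| ≤ c · d on U
  have hhd : ∀ w, 0 < d w → |h w| ≤ (c : ℝ) * d w := by
    intro w hw
    have hwU : w ∈ U := by
      by_contra hwU
      rw [hd0 w hwU] at hw; exact lt_irrefl _ hw
    obtain ⟨y, hyfr, hdist⟩ := exists_mem_frontier_infDist_compl_eq_dist hwU hUne'
    have h1 := hh.dist_le_mul w y
    rw [Real.dist_eq, h0 y hyfr, sub_zero] at h1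
    show |h w| ≤ (c : ℝ) * Metric.infDist w Uᶜ
    rw [hdist]
    exact h1
  -- the cutoff functions
  set χ : ℕ → EuclideanSpace ℝ (Fin N) → ℝ :=
    fun k x => min 1 (max (((k : ℝ) + 1) * d x - 1) 0) with hχ
  have hχ0le : ∀ k x, 0 ≤ χ k x := fun k x => le_min (by norm_num) (le_max_right _ _)
  have hχle1 : ∀ k x, χ k x ≤ 1 := fun k x => min_le_left _ _
  have hχlip : ∀ k : ℕ, LipschitzWith ((k : ℝ≥0) + 1) (χ k) := by
    intro k
    have h1 : LipschitzWith ((k : ℝ≥0) + 1) (fun x => ((k : ℝ) + 1) * d x - 1) := by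
      refine LipschitzWith.of_dist_le_mul fun x y => ?_
      have := hdlip.dist_le_mul x y
      rw [Real.dist_eq] at this ⊢
      have he : ((k : ℝ) + 1) * d x - 1 - (((k : ℝ) + 1) * d y - 1)
          = ((k : ℝ) + 1) * (d x - d y) := by ring
      rw [he, abs_mul, abs_of_pos (by positivity : (0:ℝ) < (k : ℝ) + 1)]
      push_cast
      calc ((k : ℝ) + 1) * |d x - d y| ≤ ((k : ℝ) + 1) * dist x y := by
            refine mul_le_mul_of_nonneg_left ?_ (by positivity)
            simpa [Real.dist_eq] using this
      _ = ((k : ℝ) + 1) * dist x y := rfl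
    exact (h1.max_const 0).const_min 1
  have hχeq1 : ∀ (k : ℕ) (x), 2 * ((k : ℝ) + 1)⁻¹ ≤ d x → χ k x = 1 := by
    intro k x hx
    have hk : (0:ℝ) < (k : ℝ) + 1 := by positivity
    have h1 : (1:ℝ) ≤ ((k : ℝ) + 1) * d x - 1 := by
      have : ((k : ℝ) + 1) * (2 * ((k : ℝ) + 1)⁻¹) ≤ ((k : ℝ) + 1) * d x :=
        mul_le_mul_of_nonneg_left hx hk.le
      rw [mul_comm 2 _, ← mul_assoc, mul_inv_cancel₀ hk.ne', one_mul] at this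
      linarith
    show min 1 (max (((k : ℝ) + 1) * d x - 1) 0) = 1
    exact min_eq_left (le_max_of_le_left h1)
  have hχne0 : ∀ (k : ℕ) (x), χ k x ≠ 0 → ((k : ℝ) + 1)⁻¹ < d x := by
    intro k x hx
    have hk : (0:ℝ) < (k : ℝ) + 1 := by positivity
    by_contra hle
    push_neg at hle
    have h1 : ((k : ℝ) + 1) * d x - 1 ≤ 0 := by
      have := mul_le_mul_of_nonneg_left hle hk.le
      rw [mul_inv_cancel₀ hk.ne'] at this
      linarith
    apply hx
    show min 1 (max (((k : ℝ) + 1) * d x - 1) 0) = 0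
    rw [max_eq_right h1]
    simp
  -- the truncated functions u k = h · χ k
  set u : ℕ → EuclideanSpace ℝ (Fin N) → ℝ := fun k x => h x * χ k x with hu
  -- uniform Lipschitz bound
  have hkey : ∀ k : ℕ, ∀ z w, χ k w ≠ 0 → |u k z - u k w| ≤ 4 * (c : ℝ) * ‖z - w‖ := by
    intro k z w hw
    have hk : (0:ℝ) < (k : ℝ) + 1 := by positivity
    have hdw : 0 < d w := lt_trans (by positivity) (hχne0 k w hw)
    have hbw : |h w| ≤ (c : ℝ) * d w := hhd w hdw
    have hdec : u k z - u k w = χ k z * (h z - h w) + h w * (χ k z - χ k w) := by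
      rw [hu]; ring
    have ht1 : |χ k z * (h z - h w)| ≤ (c : ℝ) * ‖z - w‖ := by
      rw [abs_mul, abs_of_nonneg (hχ0le k z)]
      have h1 := hh.dist_le_mul z w
      rw [Real.dist_eq, dist_eq_norm] at h1
      calc χ k z * |h z - h w| ≤ 1 * |h z - h w| :=
            mul_le_mul_of_nonneg_right (hχle1 k z) (abs_nonneg _)
      _ = |h z - h w| := one_mul _
      _ ≤ (c : ℝ) * ‖z - w‖ := h1
    have ht2 : |h w * (χ k z - χ k w)| ≤ 3 * (c : ℝ) * ‖z - w‖ := by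
      rcases eq_or_ne (χ k z) (χ k w) with hzw | hzw
      · rw [hzw]; simp
        positivity
      · have hb1 : |χ k z - χ k w| ≤ 1 := by
          rw [abs_sub_le_iff]
          constructor <;> nlinarith [hχ0le k z, hχle1 k z, hχ0le k w, hχle1 k w]
        have hb2 : |χ k z - χ k w| ≤ ((k : ℝ) + 1) * ‖z - w‖ := by
          have := (hχlip k).dist_le_mul z w
          rw [Real.dist_eq, dist_eq_norm] at this
          push_cast at this
          exact this
        have hdwlt : d w ≤ 2 * ((k : ℝ) + 1)⁻¹ + ‖z - w‖ := by
          by_contra hge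
          push_neg at hge
          have hdz : 2 * ((k : ℝ) + 1)⁻¹ ≤ d z := by
            have h2 : d w ≤ d z + dist w z :=
              Metric.infDist_le_infDist_add_dist (x := w) (y := z) (s := Uᶜ)
            have h3 : dist w z = ‖z - w‖ := by rw [dist_eq_norm, norm_sub_rev]
            rw [h3] at h2
            linarith
          have hw1 : χ k w = 1 := hχeq1 k w (by linarith [norm_nonneg (z - w)])
          have hz1 : χ k z = 1 := hχeq1 k z hdz
          exact hzw (hz1.trans hw1.symm)
        calc |h w * (χ k z - χ k w)| = |h w| * |χ k z - χ k w| := abs_mul _ _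
        _ ≤ ((c : ℝ) * d w) * |χ k z - χ k w| :=
            mul_le_mul_of_nonneg_right hbw (abs_nonneg _)
        _ ≤ ((c : ℝ) * (2 * ((k : ℝ) + 1)⁻¹ + ‖z - w‖)) * |χ k z - χ k w| := by
            refine mul_le_mul_of_nonneg_right ?_ (abs_nonneg _)
            exact mul_le_mul_of_nonneg_left hdwlt c.coe_nonneg
        _ = (c : ℝ) * (2 * ((k : ℝ) + 1)⁻¹) * |χ k z - χ k w|
              + (c : ℝ) * ‖z - w‖ * |χ k z - χ k w| := by ring
        _ ≤ (c : ℝ) * (2 * ((k : ℝ) + 1)⁻¹) * (((k : ℝ) + 1) * ‖z - w‖)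
              + (c : ℝ) * ‖z - w‖ * 1 := by
            refine add_le_add ?_ ?_
            · refine mul_le_mul_of_nonneg_left hb2 (by positivity)
            · refine mul_le_mul_of_nonneg_left hb1 (by positivity)
        _ = (c : ℝ) * 2 * (((k : ℝ) + 1)⁻¹ * ((k : ℝ) + 1)) * ‖z - w‖
              + (c : ℝ) * ‖z - w‖ := by ring
        _ = 3 * (c : ℝ) * ‖z - w‖ := by
            rw [inv_mul_cancel₀ hk.ne']; ring
    calc |u k z - u k w| = |χ k z * (h z - h w) + h w * (χ k z - χ k w)| := by rw [hdec]
    _ ≤ |χ k z * (h z - h w)| + |h w * (χ k z - χ k w)| := abs_add_le _ _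
    _ ≤ (c : ℝ) * ‖z - w‖ + 3 * (c : ℝ) * ‖z - w‖ := add_le_add ht1 ht2
    _ = 4 * (c : ℝ) * ‖z - w‖ := by ring
  have hulip : ∀ k : ℕ, LipschitzWith (4 * c) (u k) := by
    intro k
    refine LipschitzWith.of_dist_le_mul fun z w => ?_
    rw [Real.dist_eq, dist_eq_norm]
    push_cast
    rcases eq_or_ne (χ k w) 0 with hw0 | hw0
    · rcases eq_or_ne (χ k z) 0 with hz0 | hz0
      · rw [hu]
        simp only [hw0, hz0, mul_zero, sub_zero]
        simp
        positivity
      · rw [abs_sub_comm, norm_sub_rev]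
        exact hkey k w z hz0
    · exact hkey k z w hw0
  -- compact support inside U
  have husupp : ∀ k : ℕ, tsupport (u k) ⊆ {x | ((k : ℝ) + 1)⁻¹ ≤ d x} := by
    intro k
    have h1 : Function.support (u k) ⊆ {x | ((k : ℝ) + 1)⁻¹ ≤ d x} := by
      intro x hx
      have hχx : χ k x ≠ 0 := by
        intro hc
        apply hx
        rw [hu]; simp [hc]
      exact le_of_lt (hχne0 k x hχx)
    refine closure_minimal h1 ?_
    have : {x : EuclideanSpace ℝ (Fin N) | ((k : ℝ) + 1)⁻¹ ≤ d x}
        = d ⁻¹' (Set.Ici (((k : ℝ) + 1)⁻¹)) := rfl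
    rw [this]
    exact IsClosed.preimage (Metric.continuous_infDist_pt _) isClosed_Ici
  have hsubU : ∀ k : ℕ, {x : EuclideanSpace ℝ (Fin N) | ((k : ℝ) + 1)⁻¹ ≤ d x} ⊆ U := by
    intro k x hx
    by_contra hxU
    rw [Set.mem_setOf_eq, hd0 x hxU] at hx
    have : (0:ℝ) < ((k : ℝ) + 1)⁻¹ := by positivity
    linarith
  have hucs : ∀ k : ℕ, HasCompactSupport (u k) := by
    intro k
    have hcpt : IsCompact {x : EuclideanSpace ℝ (Fin N) | ((k : ℝ) + 1)⁻¹ ≤ d x} :=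
      Metric.isCompact_of_isClosed_isBounded
        (IsClosed.preimage (Metric.continuous_infDist_pt _) isClosed_Ici)
        (hUbdd.subset (hsubU k))
    refine HasCompactSupport.intro hcpt ?_
    intro x hx
    have hχx : χ k x = 0 := by
      by_contra hc
      exact hx (le_of_lt (hχne0 k x hc))
    show h x * χ k x = 0
    rw [hχx, mul_zero]
  have huU : ∀ k : ℕ, tsupport (u k) ⊆ U := fun k => (husupp k).trans (hsubU k)
  -- apply the core lemma to each u k
  have heqk : ∀ k : ℕ, ∫ x in U, fderiv ℝ (u k) x (F x) = -sintegralOn μ U (u k) :=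
    fun k => divergence_lipschitz hUopen hF hdiv (hulip k) (hucs k) (huU k)
  -- eventual equality of derivatives on U
  have hevent : ∀ x ∈ U, ∀ᶠ k : ℕ in atTop, fderiv ℝ (u k) x = fderiv ℝ h x := by
    intro x hx
    have hdx := hdpos x hx
    have htend : Tendsto (fun k : ℕ => 2 * ((k : ℝ) + 1)⁻¹) atTop (𝓝 0) := by
      simpa using tendsto_one_div_add_atTop_nhds_zero_nat (𝕜 := ℝ).const_mul 2
    filter_upwards [htend.eventually_lt_const hdx] with k hk
    have hV : {y : EuclideanSpace ℝ (Fin N) | 2 * ((k : ℝ) + 1)⁻¹ < d y} ∈ 𝓝 x := by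
      refine IsOpen.mem_nhds ?_ hk
      have : {y : EuclideanSpace ℝ (Fin N) | 2 * ((k : ℝ) + 1)⁻¹ < d y}
          = d ⁻¹' (Set.Ioi (2 * ((k : ℝ) + 1)⁻¹)) := rfl
      rw [this]
      exact IsOpen.preimage (Metric.continuous_infDist_pt _) isOpen_Ioi
    have heq : u k =ᶠ[𝓝 x] h := by
      filter_upwards [hV] with y hy
      rw [hu]
      simp only []
      rw [hχeq1 k y (le_of_lt hy), mul_one]
    exact heq.fderiv_eq
  -- limit of the field integrals
  have hlim1 : Tendsto (fun k => ∫ x in U, fderiv ℝ (u k) x (F x)) atTop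
      (𝓝 (∫ x in U, fderiv ℝ h x (F x))) := by
    refine tendsto_integral_of_dominated_convergence (fun x => 4 * (c : ℝ) * ‖F x‖) ?_ ?_ ?_ ?_
    · intro k
      exact aesm_clm_apply
        ((measurable_fderiv ℝ (u k)).stronglyMeasurable.aestronglyMeasurable) hF.1
    · exact hF.norm.const_mul _
    · intro k
      refine Eventually.of_forall fun x => ?_
      calc ‖fderiv ℝ (u k) x (F x)‖ ≤ ‖fderiv ℝ (u k) x‖ * ‖F x‖ :=
            (fderiv ℝ (u k) x).le_opNorm _
      _ ≤ 4 * (c : ℝ) * ‖F x‖ := by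
          refine mul_le_mul_of_nonneg_right ?_ (norm_nonneg _)
          have := norm_fderiv_le_of_lipschitz ℝ (hulip k) (x₀ := x)
          push_cast at this
          exact this
    · refine (ae_restrict_mem hUopen.measurableSet).mono fun x hx => ?_
      have := hevent x hx
      refine Tendsto.congr' ?_ tendsto_const_nhds
      filter_upwards [this] with k hk
      rw [hk]
  -- limit of the signed-measure integrals
  have huptw : ∀ x ∈ U, ∀ᶠ k : ℕ in atTop, u k x = h x := by
    intro x hx
    have hdx := hdpos x hx
    have htend : Tendsto (fun k : ℕ => 2 * ((k : ℝ) + 1)⁻¹) atTop (𝓝 0) := by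
      simpa using tendsto_one_div_add_atTop_nhds_zero_nat (𝕜 := ℝ).const_mul 2
    filter_upwards [htend.eventually_lt_const hdx] with k hk
    rw [hu]
    simp only []
    rw [hχeq1 k x (le_of_lt hk), mul_one]
  have hubd : ∀ k x, ‖u k x‖ ≤ C := by
    intro k x
    rw [hu, Real.norm_eq_abs]
    simp only []
    rw [abs_mul, abs_of_nonneg (hχ0le k x)]
    calc |h x| * χ k x ≤ |h x| * 1 := mul_le_mul_of_nonneg_left (hχle1 k x) (abs_nonneg _)
    _ = |h x| := mul_one _
    _ ≤ C := hbd x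
  have hsintl : Tendsto (fun k => sintegralOn μ U (u k)) atTop (𝓝 (sintegralOn μ U h)) := by
    have hpos : Tendsto (fun k => ∫ x in U, u k x ∂μ.toJordanDecomposition.posPart) atTop
        (𝓝 (∫ x in U, h x ∂μ.toJordanDecomposition.posPart)) := by
      refine tendsto_integral_of_dominated_convergence (fun _ => C) ?_ ?_ ?_ ?_
      · intro k
        exact ((hh.continuous.mul (hχlip k).continuous)).aestronglyMeasurable
      · exact integrable_const C
      · intro k; exact Eventually.of_forall fun x => hubd k x
      · refine (ae_restrict_mem hUopen.measurableSet).mono fun x hx => ?_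
        exact Tendsto.congr' (by filter_upwards [huptw x hx] with k hk using hk.symm)
          tendsto_const_nhds
    have hneg : Tendsto (fun k => ∫ x in U, u k x ∂μ.toJordanDecomposition.negPart) atTop
        (𝓝 (∫ x in U, h x ∂μ.toJordanDecomposition.negPart)) := by
      refine tendsto_integral_of_dominated_convergence (fun _ => C) ?_ ?_ ?_ ?_
      · intro k
        exact ((hh.continuous.mul (hχlip k).continuous)).aestronglyMeasurable
      · exact integrable_const C
      · intro k; exact Eventually.of_forall fun x => hubd k x
      · refine (ae_restrict_mem hUopen.measurableSet).mono fun x hx => ?_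
        exact Tendsto.congr' (by filter_upwards [huptw x hx] with k hk using hk.symm)
          tendsto_const_nhds
    exact hpos.sub hneg
  have hlim2 : Tendsto (fun k => ∫ x in U, fderiv ℝ (u k) x (F x)) atTop
      (𝓝 (-sintegralOn μ U h)) := by
    simp only [heqk]
    exact hsintl.neg
  have := tendsto_nhds_unique hlim1 hlim2
  linarith


/-- **The normal trace functional depends only on the boundary values.**
Let `U ⊂ ℝ^N` be bounded open and `F ∈ L¹(U;ℝ^N)` a divergence-measure field with
divergence measure `μ`.  For bounded Lipschitz `g` let
`T(g) = ∫_U ∇g·F dx + ∫_U g dμ`.  Then `T(g)` depends only on `g|_{∂U}`, and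
`|T(g)| ≤ (‖F‖_{L¹(U)} + |μ|(U)) (sup_{∂U}|g| + Lip(g|_{∂U}))`. -/
theorem normal_trace_functional
    (N : ℕ) (U : Set (EuclideanSpace ℝ (Fin N))) (hUopen : IsOpen U)
    (hUbdd : Bornology.IsBounded U)
    (F : EuclideanSpace ℝ (Fin N) → EuclideanSpace ℝ (Fin N))
    (hF : IntegrableOn F U)
    (μ : MeasureTheory.SignedMeasure (EuclideanSpace ℝ (Fin N)))
    (hμU : μ = μ.restrict U)
    (hdiv : ∀ φ : EuclideanSpace ℝ (Fin N) → ℝ,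
      ContDiff ℝ 1 φ → HasCompactSupport φ → tsupport φ ⊆ U →
      ∫ x in U, fderiv ℝ φ x (F x) = -sintegralOn μ U φ) :
    (∀ g₁ g₂ : EuclideanSpace ℝ (Fin N) → ℝ, ∀ c₁ c₂ : ℝ≥0, ∀ C₁ C₂ : ℝ,
      LipschitzWith c₁ g₁ → LipschitzWith c₂ g₂ →
      (∀ x, |g₁ x| ≤ C₁) → (∀ x, |g₂ x| ≤ C₂) →
      Set.EqOn g₁ g₂ (frontier U) →
      gaussGreen U F μ g₁ = gaussGreen U F μ g₂) ∧
    (∀ g : EuclideanSpace ℝ (Fin N) → ℝ, ∀ c : ℝ≥0, ∀ C : ℝ,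
      LipschitzWith c g → (∀ x, |g x| ≤ C) →
      |gaussGreen U F μ g| ≤
        ((∫ x in U, ‖F x‖) + (μ.totalVariation U).toReal) *
          ((⨆ x : frontier U, |g (x : EuclideanSpace ℝ (Fin N))|) +
            lipConstOn (frontier U) g)) := by
  classical
  have hpart1 : ∀ g₁ g₂ : EuclideanSpace ℝ (Fin N) → ℝ, ∀ c₁ c₂ : ℝ≥0, ∀ C₁ C₂ : ℝ,
      LipschitzWith c₁ g₁ → LipschitzWith c₂ g₂ →
      (∀ x, |g₁ x| ≤ C₁) → (∀ x, |g₂ x| ≤ C₂) →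
      Set.EqOn g₁ g₂ (frontier U) →
      gaussGreen U F μ g₁ = gaussGreen U F μ g₂ := by
    intro g₁ g₂ c₁ c₂ C₁ C₂ hg₁ hg₂ hb₁ hb₂ heqon
    have hh : LipschitzWith (c₁ + c₂) (fun x => g₁ x - g₂ x) := hg₁.sub hg₂
    have hhb : ∀ x, |g₁ x - g₂ x| ≤ C₁ + C₂ := fun x =>
      (abs_sub (g₁ x) (g₂ x)).trans (add_le_add (hb₁ x) (hb₂ x))
    have h0 : ∀ x ∈ frontier U, g₁ x - g₂ x = 0 := fun x hx => sub_eq_zero.mpr (heqon hx)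
    have hzero := gaussGreen_zero hUopen hUbdd hF hdiv hh hhb h0
    have hae : ∀ᵐ x ∂(volume.restrict U), fderiv ℝ (fun y => g₁ y - g₂ y) x (F x)
        = fderiv ℝ g₁ x (F x) - fderiv ℝ g₂ x (F x) := by
      refine ae_restrict_of_ae ?_
      filter_upwards [hg₁.ae_differentiableAt, hg₂.ae_differentiableAt] with x h1 h2
      rw [fderiv_fun_sub h1 h2]
      simp
    have hI1 : IntegrableOn (fun x => fderiv ℝ g₁ x (F x)) U := integrableOn_fderiv_apply hF hg₁
    have hI2 : IntegrableOn (fun x => fderiv ℝ g₂ x (F x)) U := integrableOn_fderiv_apply hF hg₂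
    have hE1 : ∫ x in U, fderiv ℝ (fun y => g₁ y - g₂ y) x (F x)
        = (∫ x in U, fderiv ℝ g₁ x (F x)) - ∫ x in U, fderiv ℝ g₂ x (F x) := by
      rw [integral_congr_ae hae, integral_sub hI1 hI2]
    have hip1 : Integrable g₁ ((μ.toJordanDecomposition.posPart).restrict U) :=
      (integrable_const C₁).mono' hg₁.continuous.aestronglyMeasurable
        (Eventually.of_forall fun x => by rw [Real.norm_eq_abs]; exact hb₁ x)
    have hip2 : Integrable g₂ ((μ.toJordanDecomposition.posPart).restrict U) :=
      (integrable_const C₂).mono' hg₂.continuous.aestronglyMeasurable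
        (Eventually.of_forall fun x => by rw [Real.norm_eq_abs]; exact hb₂ x)
    have hin1 : Integrable g₁ ((μ.toJordanDecomposition.negPart).restrict U) :=
      (integrable_const C₁).mono' hg₁.continuous.aestronglyMeasurable
        (Eventually.of_forall fun x => by rw [Real.norm_eq_abs]; exact hb₁ x)
    have hin2 : Integrable g₂ ((μ.toJordanDecomposition.negPart).restrict U) :=
      (integrable_const C₂).mono' hg₂.continuous.aestronglyMeasurable
        (Eventually.of_forall fun x => by rw [Real.norm_eq_abs]; exact hb₂ x)
    have hE2 : sintegralOn μ U (fun y => g₁ y - g₂ y)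
        = sintegralOn μ U g₁ - sintegralOn μ U g₂ := by
      simp only [sintegralOn]
      rw [integral_sub hip1 hip2, integral_sub hin1 hin2]
      ring
    rw [hE1, hE2] at hzero
    simp only [gaussGreen]
    linarith
  refine ⟨hpart1, ?_⟩
  intro g c C hg hgb
  have hIFnn : 0 ≤ ∫ x in U, ‖F x‖ := integral_nonneg fun x => norm_nonneg _
  have hTVnn : (0:ℝ) ≤ (μ.totalVariation U).toReal := ENNReal.toReal_nonneg
  rcases Set.eq_empty_or_nonempty (frontier U) with hΓe | hΓne
  · -- empty frontier
    haveI : IsEmpty (frontier U) := Set.isEmpty_coe_sort.mpr hΓe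
    have hM0 : (⨆ x : frontier U, |g (x : EuclideanSpace ℝ (Fin N))|) = 0 := by
      rw [iSup_of_empty', Real.sSup_empty]
    have hL0 : lipConstOn (frontier U) g = 0 := by
      rw [lipConstOn]
      have hset : {a : ℝ | 0 ≤ a ∧ ∀ x ∈ frontier U, ∀ y ∈ frontier U, |g x - g y| ≤ a * ‖x - y‖}
          = Set.Ici 0 := by
        ext a
        simp [hΓe]
      rw [hset, csInf_Ici]
    have hzero : gaussGreen U F μ g = 0 := by
      rcases isClopen_iff.mp (isClopen_iff_frontier_eq_empty.mpr hΓe) with hU | hU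
      · rw [gaussGreen, hU]
        simp [sintegralOn]
      · have hcompact : IsCompact (Set.univ : Set (EuclideanSpace ℝ (Fin N))) :=
          Metric.isCompact_of_isClosed_isBounded isClosed_univ (hU ▸ hUbdd)
        have hcs : HasCompactSupport g :=
          hcompact.of_isClosed_subset (isClosed_tsupport g) (Set.subset_univ _)
        have hident := divergence_lipschitz hUopen hF hdiv hg hcs
          (by rw [hU]; exact Set.subset_univ _)
        rw [gaussGreen, hident]
        ring
    rw [hzero, hM0, hL0]
    simp
  · -- nonempty frontier
    set Γ := frontier U with hΓdef
    set S := {a : ℝ | 0 ≤ a ∧ ∀ x ∈ Γ, ∀ y ∈ Γ, |g x - g y| ≤ a * ‖x - y‖} with hSdef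
    have hSne : S.Nonempty := by
      refine ⟨(c : ℝ), c.coe_nonneg, fun x _ y _ => ?_⟩
      have := hg.dist_le_mul x y
      rw [Real.dist_eq, dist_eq_norm] at this
      exact this
    have hLS : lipConstOn Γ g = sInf S := rfl
    have hL0' : 0 ≤ lipConstOn Γ g := by
      rw [hLS]
      exact le_csInf hSne fun b hb => hb.1
    have hLlip : ∀ x ∈ Γ, ∀ y ∈ Γ, |g x - g y| ≤ lipConstOn Γ g * ‖x - y‖ := by
      intro x hx y hy
      rcases eq_or_ne x y with rfl | hxy
      · simp
      · have hpos : 0 < ‖x - y‖ := by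
          rw [norm_pos_iff, sub_ne_zero]
          exact hxy
        have hdle : |g x - g y| / ‖x - y‖ ≤ sInf S := by
          refine le_csInf hSne fun a ha => ?_
          rw [div_le_iff₀ hpos]
          exact ha.2 x hx y hy
        rw [hLS]
        calc |g x - g y| = |g x - g y| / ‖x - y‖ * ‖x - y‖ := by field_simp
        _ ≤ sInf S * ‖x - y‖ := mul_le_mul_of_nonneg_right hdle hpos.le
    have hLon : LipschitzOnWith (lipConstOn Γ g).toNNReal g Γ := by
      rw [lipschitzOnWith_iff_dist_le_mul]
      intro x hx y hy
      rw [Real.dist_eq, dist_eq_norm, Real.coe_toNNReal _ hL0']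
      exact hLlip x hx y hy
    obtain ⟨g', hg'lip, hg'eq⟩ := hLon.extend_real
    set M := ⨆ x : Γ, |g (x : EuclideanSpace ℝ (Fin N))| with hMdef
    have hMbdd : BddAbove (Set.range fun x : Γ => |g (x : EuclideanSpace ℝ (Fin N))|) := by
      refine ⟨C, ?_⟩
      rintro _ ⟨x, rfl⟩
      exact hgb _
    have hMle : ∀ x : Γ, |g (x : EuclideanSpace ℝ (Fin N))| ≤ M := fun x => le_ciSup hMbdd x
    have hM0' : 0 ≤ M :=
      le_trans (abs_nonneg _) (hMle ⟨hΓne.choose, hΓne.choose_spec⟩)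
    set gE : EuclideanSpace ℝ (Fin N) → ℝ := fun x => max (-M) (min M (g' x)) with hgEdef
    have hgElip : LipschitzWith (lipConstOn Γ g).toNNReal gE :=
      (hg'lip.const_min M).const_max (-M)
    have hgEeq : Set.EqOn g gE Γ := by
      intro x hx
      have hgx : |g x| ≤ M := hMle ⟨x, hx⟩
      show g x = max (-M) (min M (g' x))
      rw [← hg'eq hx, min_eq_right (le_of_abs_le hgx), max_eq_right (neg_le_of_abs_le hgx)]
    have hgEbd : ∀ x, |gE x| ≤ M := by
      intro x
      show |max (-M) (min M (g' x))| ≤ M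
      rw [abs_le]
      exact ⟨le_max_left _ _, max_le (by linarith) (min_le_left _ _)⟩
    have heqT : gaussGreen U F μ g = gaussGreen U F μ gE :=
      hpart1 g gE c (lipConstOn Γ g).toNNReal C M hg hgElip hgb hgEbd hgEeq
    rw [heqT]
    have hfdle : ∀ x, ‖fderiv ℝ gE x‖ ≤ lipConstOn Γ g := by
      intro x
      have := norm_fderiv_le_of_lipschitz ℝ hgElip (x₀ := x)
      rwa [Real.coe_toNNReal _ hL0'] at this
    have hb1 : |∫ x in U, fderiv ℝ gE x (F x)| ≤ lipConstOn Γ g * ∫ x in U, ‖F x‖ := by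
      rw [← Real.norm_eq_abs]
      calc ‖∫ x in U, fderiv ℝ gE x (F x)‖ ≤ ∫ x in U, lipConstOn Γ g * ‖F x‖ := by
            refine norm_integral_le_of_norm_le (hF.norm.const_mul _) ?_
            refine Eventually.of_forall fun x => ?_
            calc ‖fderiv ℝ gE x (F x)‖ ≤ ‖fderiv ℝ gE x‖ * ‖F x‖ := (fderiv ℝ gE x).le_opNorm _
            _ ≤ lipConstOn Γ g * ‖F x‖ :=
                mul_le_mul_of_nonneg_right (hfdle x) (norm_nonneg _)
      _ = lipConstOn Γ g * ∫ x in U, ‖F x‖ := integral_const_mul _ _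
    have hp : |∫ x in U, gE x ∂μ.toJordanDecomposition.posPart|
        ≤ M * (μ.toJordanDecomposition.posPart U).toReal := by
      rw [← Real.norm_eq_abs]
      calc ‖∫ x in U, gE x ∂μ.toJordanDecomposition.posPart‖
          ≤ ∫ _x in U, M ∂μ.toJordanDecomposition.posPart :=
            norm_integral_le_of_norm_le (integrable_const M)
              (Eventually.of_forall fun x => by rw [Real.norm_eq_abs]; exact hgEbd x)
      _ = M * (μ.toJordanDecomposition.posPart U).toReal := by
          rw [setIntegral_const, smul_eq_mul, mul_comm]; rfl
    have hn : |∫ x in U, gE x ∂μ.toJordanDecomposition.negPart|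
        ≤ M * (μ.toJordanDecomposition.negPart U).toReal := by
      rw [← Real.norm_eq_abs]
      calc ‖∫ x in U, gE x ∂μ.toJordanDecomposition.negPart‖
          ≤ ∫ _x in U, M ∂μ.toJordanDecomposition.negPart :=
            norm_integral_le_of_norm_le (integrable_const M)
              (Eventually.of_forall fun x => by rw [Real.norm_eq_abs]; exact hgEbd x)
      _ = M * (μ.toJordanDecomposition.negPart U).toReal := by
          rw [setIntegral_const, smul_eq_mul, mul_comm]; rfl
    have htv : (μ.totalVariation U).toReal
        = (μ.toJordanDecomposition.posPart U).toReal
          + (μ.toJordanDecomposition.negPart U).toReal := by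
      rw [MeasureTheory.SignedMeasure.totalVariation, Measure.add_apply,
        ENNReal.toReal_add (measure_ne_top _ _) (measure_ne_top _ _)]
    have hb2 : |sintegralOn μ U gE| ≤ M * (μ.totalVariation U).toReal := by
      rw [sintegralOn, htv]
      calc |(∫ x in U, gE x ∂μ.toJordanDecomposition.posPart)
            - ∫ x in U, gE x ∂μ.toJordanDecomposition.negPart|
          ≤ |∫ x in U, gE x ∂μ.toJordanDecomposition.posPart|
            + |∫ x in U, gE x ∂μ.toJordanDecomposition.negPart| := abs_sub _ _
      _ ≤ M * (μ.toJordanDecomposition.posPart U).toReal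
            + M * (μ.toJordanDecomposition.negPart U).toReal := add_le_add hp hn
      _ = M * ((μ.toJordanDecomposition.posPart U).toReal
            + (μ.toJordanDecomposition.negPart U).toReal) := by ring
    rw [gaussGreen]
    have hppos : 0 ≤ M * (μ.totalVariation U).toReal := mul_nonneg hM0' hTVnn
    calc |(∫ x in U, fderiv ℝ gE x (F x)) + sintegralOn μ U gE|
        ≤ |∫ x in U, fderiv ℝ gE x (F x)| + |sintegralOn μ U gE| := abs_add_le _ _
    _ ≤ lipConstOn Γ g * (∫ x in U, ‖F x‖) + M * (μ.totalVariation U).toReal :=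
        add_le_add hb1 hb2
    _ ≤ ((∫ x in U, ‖F x‖) + (μ.totalVariation U).toReal) * (M + lipConstOn Γ g) := by
        nlinarith [mul_nonneg hM0' hIFnn, mul_nonneg hL0' hTVnn]

end DMF
end
end

section
/- Let L > 0, m ≥ 1, let a : [−L,L] → ℝ^m be continuous, and let K ⊂ ℝ^m be compact. Assume that for every κ ∈ K the set { ξ ∈ [−L,L] : a(ξ)·κ = 0 } has Lebesgue measure zero. For δ > 0 define h_δ(κ) = Leb{ ξ ∈ [−L,L] : |a(ξ)·κ| ≤ δ }. Then h_{δ₁}(κ) ≤ h_{δ₂}(κ) whenever 0 < δ₁ ≤ δ₂ and κ ∈ K, and sup_{κ∈K} h_δ(κ) → 0 as δ → 0+. -/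
open MeasureTheory Filter Topology
open scoped ENNReal

/-- **Uniform smallness of the near-degeneracy sets.**
Let `a : [−L,L] → ℝ^m` be continuous and `K ⊂ ℝ^m` compact.  Assume that for every
`κ ∈ K` the set `{ξ ∈ [−L,L] : a(ξ)·κ = 0}` has Lebesgue measure zero.  For `δ > 0` set
`h_δ(κ) = Leb{ξ ∈ [−L,L] : |a(ξ)·κ| ≤ δ}`.  Then `h_δ` is monotone in `δ` on `K` and
`sup_{κ∈K} h_δ(κ) → 0` as `δ → 0+`. -/
theorem near_degeneracy_sets_small
    (L : ℝ) (hL : 0 < L) (m : ℕ) (hm : 1 ≤ m)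
    (a : ℝ → Fin m → ℝ) (ha : ContinuousOn a (Set.Icc (-L) L))
    (K : Set (Fin m → ℝ)) (hK : IsCompact K)
    (hnd : ∀ κ ∈ K, volume {ξ ∈ Set.Icc (-L) L | ∑ i, a ξ i * κ i = 0} = 0) :
    (∀ δ₁ δ₂ : ℝ, 0 < δ₁ → δ₁ ≤ δ₂ → ∀ κ ∈ K,
      (volume {ξ ∈ Set.Icc (-L) L | |∑ i, a ξ i * κ i| ≤ δ₁}).toReal ≤
        (volume {ξ ∈ Set.Icc (-L) L | |∑ i, a ξ i * κ i| ≤ δ₂}).toReal) ∧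
    Tendsto
      (fun δ : ℝ => ⨆ κ : K,
        (volume {ξ ∈ Set.Icc (-L) L | |∑ i, a ξ i * (κ : Fin m → ℝ) i| ≤ δ}).toReal)
      (nhdsWithin 0 (Set.Ioi 0)) (nhds 0) := by
  have hf : ∀ κ : Fin m → ℝ, ContinuousOn (fun ξ => ∑ i, a ξ i * κ i) (Set.Icc (-L) L) := by
    intro κ
    apply continuousOn_finset_sum
    intro i _
    exact ((continuous_apply i).comp_continuousOn ha).mul continuousOn_const
  set S : ℝ → (Fin m → ℝ) → Set ℝ :=
    fun δ κ => {ξ ∈ Set.Icc (-L) L | |∑ i, a ξ i * κ i| ≤ δ} with hSdef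
  have hclosed : ∀ δ (κ : Fin m → ℝ), IsClosed (S δ κ) := by
    intro δ κ
    have : S δ κ = Set.Icc (-L) L ∩ (fun ξ => |∑ i, a ξ i * κ i|) ⁻¹' Set.Iic δ := rfl
    rw [this]
    exact ((hf κ).abs).preimage_isClosed_of_isClosed isClosed_Icc isClosed_Iic
  have hfin : ∀ δ (κ : Fin m → ℝ), volume (S δ κ) ≠ ⊤ := fun δ κ =>
    ((measure_mono (Set.sep_subset _ _)).trans_lt measure_Icc_lt_top).ne
  have hmono : ∀ {δ₁ δ₂ : ℝ}, δ₁ ≤ δ₂ → ∀ κ : Fin m → ℝ,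
      (volume (S δ₁ κ)).toReal ≤ (volume (S δ₂ κ)).toReal := by
    intro δ₁ δ₂ h κ
    exact ENNReal.toReal_mono (hfin _ _) (measure_mono fun ξ hξ => ⟨hξ.1, hξ.2.trans h⟩)
  constructor
  · exact fun δ₁ δ₂ _ h κ _ => hmono h κ
  -- per-point smallness
  have key : ∀ κ ∈ K, ∀ ε > 0, ∃ d > 0, (volume (S (2 * d) κ)).toReal < ε := by
    intro κ hκ ε hε
    set T : ℕ → Set ℝ := fun n => S (1 / ((n : ℝ) + 1)) κ with hT
    have hanti : Antitone T := by
      intro n n' h ξ hξ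
      refine ⟨hξ.1, hξ.2.trans ?_⟩
      apply one_div_le_one_div_of_le (by positivity)
      have : (n : ℝ) ≤ n' := Nat.cast_le.2 h
      linarith
    have hiInter : ⋂ n, T n = {ξ ∈ Set.Icc (-L) L | ∑ i, a ξ i * κ i = 0} := by
      ext ξ
      simp only [Set.mem_iInter, hT, hSdef, Set.mem_sep_iff]
      constructor
      · intro h
        refine ⟨(h 0).1, ?_⟩
        by_contra hne
        obtain ⟨n, hn⟩ := exists_nat_one_div_lt (abs_pos.2 hne)
        exact absurd (h n).2 (not_le.2 hn)
      · intro h n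
        refine ⟨h.1, ?_⟩
        rw [h.2, abs_zero]
        positivity
    have htend := tendsto_measure_iInter_atTop (μ := volume)
      (fun n => (hclosed _ _).measurableSet.nullMeasurableSet) hanti ⟨0, hfin _ _⟩
    rw [hiInter, hnd κ hκ] at htend
    obtain ⟨n, hn⟩ := (htend.eventually_lt_const
      (show (0 : ℝ≥0∞) < ENNReal.ofReal ε by simp [hε])).exists
    refine ⟨1 / (2 * ((n : ℝ) + 1)), by positivity, ?_⟩
    have h2 : 2 * (1 / (2 * ((n : ℝ) + 1))) = 1 / ((n : ℝ) + 1) := by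
      field_simp
    rw [h2]
    exact ENNReal.toReal_lt_of_lt_ofReal hn
  -- main tendsto
  rw [Metric.tendsto_nhdsWithin_nhds]
  intro ε hε
  rcases K.eq_empty_or_nonempty with hKe | ⟨κ₀, hκ₀⟩
  · refine ⟨1, one_pos, fun δ _ _ => ?_⟩
    have : IsEmpty ↥K := Set.isEmpty_coe_sort.2 hKe
    simpa [Real.iSup_of_isEmpty, Real.dist_eq] using hε
  · obtain ⟨C, hC⟩ := isCompact_Icc.exists_bound_of_continuousOn ha
    set B := max C 1 with hB
    have hB1 : (1 : ℝ) ≤ B := le_max_right _ _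
    have haB : ∀ ξ ∈ Set.Icc (-L) L, ∀ i, |a ξ i| ≤ B := by
      intro ξ hξ i
      calc |a ξ i| = ‖a ξ i‖ := (Real.norm_eq_abs _).symm
        _ ≤ ‖a ξ‖ := norm_le_pi_norm (a ξ) i
        _ ≤ C := hC ξ hξ
        _ ≤ B := le_max_left _ _
    have hm1 : (1 : ℝ) ≤ (m : ℝ) := by exact_mod_cast hm
    have hmB : 0 < (m : ℝ) * B := by nlinarith
    choose! d hd0 hdε using fun κ hκ => key κ hκ ε hε
    obtain ⟨t, htK, htcov⟩ := hK.elim_nhds_subcover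
      (fun κ => Metric.ball κ (d κ / ((m : ℝ) * B)))
      (fun κ hκ => Metric.ball_mem_nhds _ (div_pos (hd0 κ hκ) hmB))
    have htne : t.Nonempty := by
      obtain ⟨i, hit, -⟩ := by simpa using htcov hκ₀
      exact ⟨i, hit⟩
    refine ⟨t.inf' htne d, (Finset.lt_inf'_iff htne).2 fun i hi => hd0 i (htK i hi),
      fun x hx hdist => ?_⟩
    have hx0 : 0 < x := hx
    rw [Real.dist_eq, sub_zero, abs_of_pos hx0] at hdist
    set M := t.sup' htne (fun i => (volume (S (2 * d i) i)).toReal) with hM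
    have hMε : M < ε := (Finset.sup'_lt_iff htne).2 fun i hi => hdε i (htK i hi)
    have hM0 : 0 ≤ M := le_trans ENNReal.toReal_nonneg
      (Finset.le_sup' (fun i => (volume (S (2 * d i) i)).toReal) htne.choose_spec)
    have hsup : (⨆ κ : K, (volume (S x κ)).toReal) ≤ M := by
      refine Real.iSup_le (fun κ => ?_) hM0
      obtain ⟨i, hit, hκi⟩ : ∃ i ∈ t, (κ : Fin m → ℝ) ∈ Metric.ball i (d i / ((m : ℝ) * B)) := by
        simpa using htcov κ.2
      have hxd : x ≤ d i := le_trans (le_of_lt hdist) (Finset.inf'_le d hit)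
      have hsub : S x (κ : Fin m → ℝ) ⊆ S (2 * d i) i := by
        intro ξ hξ
        refine ⟨hξ.1, ?_⟩
        have hdiff : |∑ j, a ξ j * i j - ∑ j, a ξ j * (κ : Fin m → ℝ) j|
            ≤ (m : ℝ) * B * dist (κ : Fin m → ℝ) i := by
          rw [← Finset.sum_sub_distrib]
          calc |∑ j, (a ξ j * i j - a ξ j * (κ : Fin m → ℝ) j)|
              ≤ ∑ j, |a ξ j * i j - a ξ j * (κ : Fin m → ℝ) j| :=
                Finset.abs_sum_le_sum_abs _ _
            _ ≤ ∑ _j : Fin m, B * dist (κ : Fin m → ℝ) i := by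
                refine Finset.sum_le_sum fun j _ => ?_
                rw [← mul_sub, abs_mul]
                refine mul_le_mul (haB ξ hξ.1 j) ?_ (abs_nonneg _) (le_trans (abs_nonneg _)
                  (haB ξ hξ.1 j))
                calc |i j - (κ : Fin m → ℝ) j| = dist ((κ : Fin m → ℝ) j) (i j) := by
                      rw [Real.dist_eq, abs_sub_comm]
                  _ ≤ dist (κ : Fin m → ℝ) i := dist_le_pi_dist _ _ j
            _ = (m : ℝ) * B * dist (κ : Fin m → ℝ) i := by
                rw [Finset.sum_const, Finset.card_univ, Fintype.card_fin, nsmul_eq_mul]; ring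
        have hdb : (m : ℝ) * B * dist (κ : Fin m → ℝ) i ≤ d i := by
          have := (mul_lt_mul_iff_right₀ hmB).2 (Metric.mem_ball.1 hκi)
          rw [mul_div_cancel₀ _ (ne_of_gt hmB)] at this
          exact le_of_lt this
        calc |∑ j, a ξ j * i j|
            ≤ |∑ j, a ξ j * (κ : Fin m → ℝ) j|
              + |∑ j, a ξ j * i j - ∑ j, a ξ j * (κ : Fin m → ℝ) j| := by
              have := abs_add_le (∑ j, a ξ j * (κ : Fin m → ℝ) j)
                (∑ j, a ξ j * i j - ∑ j, a ξ j * (κ : Fin m → ℝ) j)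
              rwa [add_sub_cancel] at this
          _ ≤ x + (m : ℝ) * B * dist (κ : Fin m → ℝ) i := add_le_add hξ.2 hdiff
          _ ≤ d i + d i := add_le_add hxd hdb
          _ = 2 * d i := by ring
      exact (ENNReal.toReal_mono (hfin _ _) (measure_mono hsub)).trans
        (Finset.le_sup' (fun i => (volume (S (2 * d i) i)).toReal) hit)
    have hsupnn : 0 ≤ ⨆ κ : K, (volume (S x κ)).toReal :=
      Real.iSup_nonneg fun κ => ENNReal.toReal_nonneg
    rw [Real.dist_eq, sub_zero, abs_of_nonneg hsupnn]
    exact lt_of_le_of_lt hsup hMε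
end

section
/- Let d = d' + d'' with d', d'' ≥ 1, write n = (n', n'') ∈ ℝ^{d'} × ℝ^{d''} for vectors in ℝ^d, and let ℓ > 0. Let a : ℝ → ℝ^d and b : ℝ → ℝ^{d''×d''} be continuous, with b(ξ) symmetric positive semidefinite for every ξ. Let E ⊂ ℝ be compact and set |𝓛(iτ, in, ξ)| = ( |τ + a(ξ)·n|² + (n''ᵀ b(ξ) n'')² )^{1/2}. Assume there exist α ∈ (0,1), β > 0, C > 0 and J₀ ≥ 1 such that for every δ > 0, every τ ∈ ℝ and every n ∈ ℓℤ^d with |n| ≥ J₀, Leb{ ξ ∈ E : |𝓛(iτ, in, ξ)| ≤ δ } ≤ C (δ / |n|^β)^α. Then for every (τ, κ) ∈ ℝ × ℝ^d with τ² + |κ|² = 1, the set { ξ ∈ E : τ + a(ξ)·κ = 0 and κ''ᵀ b(ξ) κ'' = 0 } has Lebesgue measure zero. -/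
open MeasureTheory Filter

lemma psd_kernel {m : ℕ} {A : Matrix (Fin m) (Fin m) ℝ} (hA : A.PosSemidef)
    (x : Fin m → ℝ) (h : ∑ i, ∑ j, x i * A i j * x j = 0) :
    ∀ i, ∑ j, A i j * x j = 0 := by
  have h1 : dotProduct (star x) (A.mulVec x) = 0 := by
    simpa [dotProduct, Matrix.mulVec, Finset.mul_sum, mul_assoc] using h
  have h2 := (hA.dotProduct_mulVec_zero_iff x).mp h1
  intro i
  have := congrFun h2 i
  simpa [Matrix.mulVec, dotProduct] using this

lemma round_err (ℓ : ℝ) (hℓ : 0 < ℓ) (x : ℝ) : |ℓ * (round (x / ℓ) : ℝ) - x| ≤ ℓ := by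
  have h := abs_sub_round (x / ℓ)
  have h2 : ℓ * (round (x / ℓ) : ℝ) - x = ℓ * ((round (x / ℓ) : ℝ) - x / ℓ) := by
    field_simp
  rw [h2, abs_mul, abs_of_pos hℓ, abs_sub_comm]
  nlinarith [abs_nonneg (x / ℓ - (round (x / ℓ) : ℝ))]

lemma limit_zero (Z : Set ℝ) (r : ℕ → ℝ) (c ℓ δ₀ C J₀ α β : ℝ)
    (hc : 0 < c) (hα : α ∈ Set.Ioo (0:ℝ) 1) (hβ : 0 < β)
    (hrlow : ∀ N : ℕ, (N : ℝ) * c - ℓ ≤ r N)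
    (hvol : ∀ N : ℕ, J₀ ≤ r N → volume Z ≤ ENNReal.ofReal (C * (δ₀ / r N ^ β) ^ α)) :
    volume Z = 0 := by
  have hr_tendsto : Tendsto r atTop atTop := by
    apply tendsto_atTop_mono hrlow
    have h1 : Tendsto (fun N : ℕ => (N : ℝ) * c) atTop atTop :=
      (tendsto_natCast_atTop_atTop).atTop_mul_const hc
    exact tendsto_atTop_add_const_right _ (-ℓ) h1
  have h2 : Tendsto (fun N : ℕ => r N ^ β) atTop atTop :=
    (tendsto_rpow_atTop hβ).comp hr_tendsto
  have h3 : Tendsto (fun N : ℕ => δ₀ / r N ^ β) atTop (nhds 0) :=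
    Tendsto.div_atTop tendsto_const_nhds h2
  have h4 : Tendsto (fun N : ℕ => (δ₀ / r N ^ β) ^ α) atTop (nhds 0) := by
    have hc0 : ContinuousAt (fun x : ℝ => x ^ α) 0 :=
      Real.continuousAt_rpow_const 0 α (Or.inr hα.1.le)
    have := hc0.tendsto.comp h3
    simpa [Function.comp_def, Real.zero_rpow (ne_of_gt hα.1)] using this
  have h5 : Tendsto (fun N : ℕ => ENNReal.ofReal (C * (δ₀ / r N ^ β) ^ α)) atTop (nhds 0) := by
    have h6 : Tendsto (fun N : ℕ => C * (δ₀ / r N ^ β) ^ α) atTop (nhds 0) := by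
      simpa using h4.const_mul C
    simpa using ENNReal.tendsto_ofReal h6
  have hev : ∀ᶠ N : ℕ in atTop, volume Z ≤ ENNReal.ofReal (C * (δ₀ / r N ^ β) ^ α) :=
    (hr_tendsto.eventually_ge_atTop J₀).mono fun N hN => hvol N hN
  exact le_antisymm (ge_of_tendsto h5 hev) zero_le

lemma pointwise_bound (d' d'' : ℕ) (ℓ : ℝ) (hℓ : 0 < ℓ) (N : ℕ) (τ : ℝ)
    (κ' n' e' : Fin d' → ℝ) (κ'' n'' e'' : Fin d'' → ℝ)
    (a' : ℝ → Fin d' → ℝ) (a'' : ℝ → Fin d'' → ℝ)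
    (b : ℝ → Matrix (Fin d'') (Fin d'') ℝ)
    (hbpsd : ∀ ξ : ℝ, (b ξ).PosSemidef)
    (A₀ : ℝ) (ξ : ℝ)
    (hba : ((∑ j, |a' ξ j|) + (∑ j, |a'' ξ j|)) + (∑ i, ∑ j, |b ξ i j|) ≤ A₀)
    (he' : ∀ j, e' j = n' j - (N : ℝ) * κ' j) (he'' : ∀ j, e'' j = n'' j - (N : ℝ) * κ'' j)
    (he'b : ∀ j, |e' j| ≤ ℓ) (he''b : ∀ j, |e'' j| ≤ ℓ)
    (hlin : τ + ((∑ j, a' ξ j * κ' j) + ∑ j, a'' ξ j * κ'' j) = 0)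
    (hquad : (∑ i, ∑ j, κ'' i * b ξ i j * κ'' j) = 0) :
    Real.sqrt (((N : ℝ) * τ + ((∑ j, a' ξ j * n' j) + ∑ j, a'' ξ j * n'' j)) ^ 2 +
      (∑ i, ∑ j, n'' i * b ξ i j * n'' j) ^ 2) ≤ ℓ * A₀ + ℓ * ℓ * A₀ + 1 := by
  -- nonnegativity of the pieces of the bound
  have hsum_a : (∑ j, |a' ξ j|) + (∑ j, |a'' ξ j|) ≤ A₀ := by
    have : (0:ℝ) ≤ ∑ i, ∑ j, |b ξ i j| :=
      Finset.sum_nonneg fun i _ => Finset.sum_nonneg fun j _ => abs_nonneg _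
    linarith
  have hsum_b : (∑ i, ∑ j, |b ξ i j|) ≤ A₀ := by
    have h1 : (0:ℝ) ≤ ∑ j, |a' ξ j| := Finset.sum_nonneg fun j _ => abs_nonneg _
    have h2 : (0:ℝ) ≤ ∑ j, |a'' ξ j| := Finset.sum_nonneg fun j _ => abs_nonneg _
    linarith
  -- linear part
  have hLid : (N : ℝ) * τ + ((∑ j, a' ξ j * n' j) + ∑ j, a'' ξ j * n'' j)
      = (∑ j, a' ξ j * e' j) + ∑ j, a'' ξ j * e'' j := by
    have h1 : ∑ j, a' ξ j * n' j
        = (N : ℝ) * (∑ j, a' ξ j * κ' j) + ∑ j, a' ξ j * e' j := by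
      rw [Finset.mul_sum, ← Finset.sum_add_distrib]
      exact Finset.sum_congr rfl fun j _ => by rw [he']; ring
    have h2 : ∑ j, a'' ξ j * n'' j
        = (N : ℝ) * (∑ j, a'' ξ j * κ'' j) + ∑ j, a'' ξ j * e'' j := by
      rw [Finset.mul_sum, ← Finset.sum_add_distrib]
      exact Finset.sum_congr rfl fun j _ => by rw [he'']; ring
    rw [h1, h2]
    linear_combination (N : ℝ) * hlin
  have hLbound : |(N : ℝ) * τ + ((∑ j, a' ξ j * n' j) + ∑ j, a'' ξ j * n'' j)| ≤ ℓ * A₀ := by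
    rw [hLid]
    calc |(∑ j, a' ξ j * e' j) + ∑ j, a'' ξ j * e'' j|
        ≤ |∑ j, a' ξ j * e' j| + |∑ j, a'' ξ j * e'' j| := abs_add_le _ _
      _ ≤ (∑ j, |a' ξ j * e' j|) + ∑ j, |a'' ξ j * e'' j| := by
          gcongr <;> exact Finset.abs_sum_le_sum_abs _ _
      _ ≤ (∑ j, |a' ξ j| * ℓ) + ∑ j, |a'' ξ j| * ℓ := by
          gcongr with j _ j _
          · rw [abs_mul]; exact mul_le_mul_of_nonneg_left (he'b j) (abs_nonneg _)
          · rw [abs_mul]; exact mul_le_mul_of_nonneg_left (he''b j) (abs_nonneg _)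
      _ = ((∑ j, |a' ξ j|) + ∑ j, |a'' ξ j|) * ℓ := by rw [← Finset.sum_mul, ← Finset.sum_mul]; ring
      _ ≤ A₀ * ℓ := mul_le_mul_of_nonneg_right hsum_a hℓ.le
      _ = ℓ * A₀ := mul_comm _ _
  -- quadratic part
  have hker : ∀ i, ∑ j, b ξ i j * κ'' j = 0 := psd_kernel (hbpsd ξ) κ'' hquad
  have hsym : ∀ i j, b ξ i j = b ξ j i := by
    intro i j
    have := (hbpsd ξ).1
    have := congrFun (congrFun this i) j
    simpa [Matrix.conjTranspose_apply] using this.symm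
  have hQright : ∀ x : Fin d'' → ℝ, ∑ i, ∑ j, x i * b ξ i j * κ'' j = 0 := by
    intro x
    have : ∀ i : Fin d'', ∑ j, x i * b ξ i j * κ'' j = x i * ∑ j, b ξ i j * κ'' j := by
      intro i; rw [Finset.mul_sum]; exact Finset.sum_congr rfl fun j _ => by ring
    rw [Finset.sum_congr rfl fun i _ => this i]
    simp [hker]
  have hQleft : ∀ y : Fin d'' → ℝ, ∑ i, ∑ j, κ'' i * b ξ i j * y j = 0 := by
    intro y
    rw [Finset.sum_comm]
    have : ∀ j : Fin d'', ∑ i, κ'' i * b ξ i j * y j = y j * ∑ i, b ξ j i * κ'' i := by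
      intro j; rw [Finset.mul_sum]
      exact Finset.sum_congr rfl fun i _ => by rw [hsym i j]; ring
    rw [Finset.sum_congr rfl fun j _ => this j]
    simp [hker]
  have hQid : ∑ i, ∑ j, n'' i * b ξ i j * n'' j = ∑ i, ∑ j, e'' i * b ξ i j * e'' j := by
    have expand : ∀ i j : Fin d'', n'' i * b ξ i j * n'' j
        = e'' i * b ξ i j * e'' j + (N : ℝ) * (κ'' i * b ξ i j * e'' j)
          + (N : ℝ) * (e'' i * b ξ i j * κ'' j)
          + (N : ℝ) * (N : ℝ) * (κ'' i * b ξ i j * κ'' j) := by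
      intro i j; rw [he'' i, he'' j]; ring
    calc ∑ i, ∑ j, n'' i * b ξ i j * n'' j
        = (∑ i, ∑ j, e'' i * b ξ i j * e'' j)
          + ((N : ℝ) * ∑ i, ∑ j, κ'' i * b ξ i j * e'' j)
          + ((N : ℝ) * ∑ i, ∑ j, e'' i * b ξ i j * κ'' j)
          + ((N : ℝ) * (N : ℝ) * ∑ i, ∑ j, κ'' i * b ξ i j * κ'' j) := by
          simp only [Finset.mul_sum, ← Finset.sum_add_distrib]
          exact Finset.sum_congr rfl fun i _ => Finset.sum_congr rfl fun j _ => expand i j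
      _ = ∑ i, ∑ j, e'' i * b ξ i j * e'' j := by
          rw [hQleft e'', hQright e'', hquad]; ring
  have hQbound : |∑ i, ∑ j, n'' i * b ξ i j * n'' j| ≤ ℓ * ℓ * A₀ := by
    rw [hQid]
    calc |∑ i, ∑ j, e'' i * b ξ i j * e'' j|
        ≤ ∑ i, |∑ j, e'' i * b ξ i j * e'' j| := Finset.abs_sum_le_sum_abs _ _
      _ ≤ ∑ i, ∑ j, |e'' i * b ξ i j * e'' j| := by
          gcongr with i _; exact Finset.abs_sum_le_sum_abs _ _
      _ ≤ ∑ i, ∑ j, ℓ * |b ξ i j| * ℓ := by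
          gcongr with i _ j _
          rw [abs_mul, abs_mul]
          have h1 : |e'' i| * |b ξ i j| ≤ ℓ * |b ξ i j| :=
            mul_le_mul_of_nonneg_right (he''b i) (abs_nonneg _)
          have h2 : |e'' i * b ξ i j| * |e'' j| ≤ |e'' i * b ξ i j| * ℓ :=
            mul_le_mul_of_nonneg_left (he''b j) (abs_nonneg _)
          rw [abs_mul] at h2
          calc |e'' i| * |b ξ i j| * |e'' j| ≤ |e'' i| * |b ξ i j| * ℓ := h2
            _ ≤ ℓ * |b ξ i j| * ℓ := mul_le_mul_of_nonneg_right h1 hℓ.le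
      _ = ℓ * ℓ * ∑ i, ∑ j, |b ξ i j| := by
          rw [Finset.mul_sum]
          refine Finset.sum_congr rfl fun i _ => ?_
          rw [Finset.mul_sum]
          exact Finset.sum_congr rfl fun j _ => by ring
      _ ≤ ℓ * ℓ * A₀ := by
          exact mul_le_mul_of_nonneg_left hsum_b (by positivity)
  -- combine
  set L := (N : ℝ) * τ + ((∑ j, a' ξ j * n' j) + ∑ j, a'' ξ j * n'' j)
  set S := ∑ i, ∑ j, n'' i * b ξ i j * n'' j
  have h1 : Real.sqrt (L ^ 2 + S ^ 2) ≤ |L| + |S| := by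
    rw [show L ^ 2 + S ^ 2 = |L| ^ 2 + |S| ^ 2 by rw [sq_abs, sq_abs]]
    have h2 : |L| ^ 2 + |S| ^ 2 ≤ (|L| + |S|) ^ 2 := by nlinarith [abs_nonneg L, abs_nonneg S]
    calc Real.sqrt (|L| ^ 2 + |S| ^ 2) ≤ Real.sqrt ((|L| + |S|) ^ 2) := Real.sqrt_le_sqrt h2
      _ = |L| + |S| := Real.sqrt_sq (by positivity)
  calc Real.sqrt (L ^ 2 + S ^ 2) ≤ |L| + |S| := h1
    _ ≤ ℓ * A₀ + ℓ * ℓ * A₀ := add_le_add hLbound hQbound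
    _ ≤ ℓ * A₀ + ℓ * ℓ * A₀ + 1 := by linarith

/-- **The quantitative nondegeneracy condition implies the qualitative one.**
Write `n = (n', n'') ∈ ℝ^{d'} × ℝ^{d''}`.  Let `a = (a', a'')` and `b` be continuous,
with `b(ξ)` symmetric positive semidefinite, `E ⊂ ℝ` compact, and set
`|𝓛(iτ,in,ξ)| = (|τ + a(ξ)·n|² + (n''ᵀ b(ξ) n'')²)^{1/2}`.  If there are `α ∈ (0,1)`,
`β > 0`, `C > 0`, `J₀ ≥ 1` such that for all `δ > 0`, `τ ∈ ℝ` and lattice points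
`n ∈ ℓℤ^d` with `|n| ≥ J₀` one has `Leb{ξ ∈ E : |𝓛(iτ,in,ξ)| ≤ δ} ≤ C(δ/|n|^β)^α`,
then for every `(τ,κ)` with `τ² + |κ|² = 1` the set
`{ξ ∈ E : τ + a(ξ)·κ = 0 ∧ κ''ᵀ b(ξ) κ'' = 0}` is Lebesgue null. -/
theorem nondegeneracy_of_quantitative
    (d' d'' : ℕ) (hd' : 1 ≤ d') (hd'' : 1 ≤ d'') (ℓ : ℝ) (hℓ : 0 < ℓ)
    (a' : ℝ → Fin d' → ℝ) (a'' : ℝ → Fin d'' → ℝ)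
    (b : ℝ → Matrix (Fin d'') (Fin d'') ℝ)
    (ha' : ∀ j, Continuous fun ξ => a' ξ j)
    (ha'' : ∀ j, Continuous fun ξ => a'' ξ j)
    (hb : ∀ i j, Continuous fun ξ => b ξ i j)
    (hbpsd : ∀ ξ : ℝ, (b ξ).PosSemidef)
    (E : Set ℝ) (hE : IsCompact E)
    (α β C J₀ : ℝ) (hα : α ∈ Set.Ioo (0 : ℝ) 1) (hβ : 0 < β) (hC : 0 < C) (hJ₀ : 1 ≤ J₀)
    (hmain : ∀ δ : ℝ, 0 < δ → ∀ τ : ℝ, ∀ n' : Fin d' → ℝ, ∀ n'' : Fin d'' → ℝ,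
      (∃ z' : Fin d' → ℤ, ∀ j, n' j = ℓ * (z' j : ℝ)) →
      (∃ z'' : Fin d'' → ℤ, ∀ j, n'' j = ℓ * (z'' j : ℝ)) →
      J₀ ≤ Real.sqrt (∑ j, n' j ^ 2 + ∑ j, n'' j ^ 2) →
      volume {ξ ∈ E |
          Real.sqrt ((τ + ((∑ j, a' ξ j * n' j) + ∑ j, a'' ξ j * n'' j)) ^ 2 +
            (∑ i, ∑ j, n'' i * b ξ i j * n'' j) ^ 2) ≤ δ} ≤
        ENNReal.ofReal (C * (δ / Real.sqrt (∑ j, n' j ^ 2 + ∑ j, n'' j ^ 2) ^ β) ^ α)) :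
    ∀ τ : ℝ, ∀ κ' : Fin d' → ℝ, ∀ κ'' : Fin d'' → ℝ,
      τ ^ 2 + ((∑ j, κ' j ^ 2) + ∑ j, κ'' j ^ 2) = 1 →
      volume {ξ ∈ E |
        τ + ((∑ j, a' ξ j * κ' j) + ∑ j, a'' ξ j * κ'' j) = 0 ∧
        (∑ i, ∑ j, κ'' i * b ξ i j * κ'' j) = 0} = 0 := by
  intro τ κ' κ'' hnorm
  set Z := {ξ ∈ E |
        τ + ((∑ j, a' ξ j * κ' j) + ∑ j, a'' ξ j * κ'' j) = 0 ∧
        (∑ i, ∑ j, κ'' i * b ξ i j * κ'' j) = 0} with hZ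
  by_cases hs : (∑ j, κ' j ^ 2) + (∑ j, κ'' j ^ 2) = 0
  · have hκ'0 : ∀ j, κ' j = 0 := by
      intro j
      have h1 : ∑ j, κ' j ^ 2 = 0 := by
        have := Finset.sum_nonneg (fun j (_ : j ∈ Finset.univ) => sq_nonneg (κ' j))
        have := Finset.sum_nonneg (fun j (_ : j ∈ Finset.univ) => sq_nonneg (κ'' j))
        linarith
      have := (Finset.sum_eq_zero_iff_of_nonneg
        (fun j (_ : j ∈ Finset.univ) => sq_nonneg (κ' j))).mp h1 j (Finset.mem_univ j)
      exact pow_eq_zero_iff (two_ne_zero) |>.mp this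
    have hκ''0 : ∀ j, κ'' j = 0 := by
      intro j
      have h1 : ∑ j, κ'' j ^ 2 = 0 := by
        have := Finset.sum_nonneg (fun j (_ : j ∈ Finset.univ) => sq_nonneg (κ' j))
        have := Finset.sum_nonneg (fun j (_ : j ∈ Finset.univ) => sq_nonneg (κ'' j))
        linarith
      have := (Finset.sum_eq_zero_iff_of_nonneg
        (fun j (_ : j ∈ Finset.univ) => sq_nonneg (κ'' j))).mp h1 j (Finset.mem_univ j)
      exact pow_eq_zero_iff (two_ne_zero) |>.mp this
    have hτ : τ ≠ 0 := by
      intro h0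
      rw [h0, hs] at hnorm
      norm_num at hnorm
    have : Z = ∅ := by
      ext ξ
      simp only [hZ, Set.mem_setOf_eq, Set.mem_empty_iff_false, iff_false, not_and]
      intro _ hlin
      exfalso
      apply hτ
      simpa [hκ'0, hκ''0] using hlin
    rw [this]; exact measure_empty
  -- main case: κ ≠ 0
  · -- a uniform bound on the coefficients over E
    obtain ⟨A₀, hA₀, hba⟩ : ∃ A₀ : ℝ, 0 ≤ A₀ ∧ ∀ ξ ∈ E,
        ((∑ j, |a' ξ j|) + (∑ j, |a'' ξ j|)) + (∑ i, ∑ j, |b ξ i j|) ≤ A₀ := by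
      set g : ℝ → ℝ := fun ξ => ((∑ j, |a' ξ j|) + (∑ j, |a'' ξ j|)) + (∑ i, ∑ j, |b ξ i j|)
        with hg
      have hgc : Continuous g := by
        apply Continuous.add
        apply Continuous.add
        · exact continuous_finset_sum _ fun j _ => (ha' j).abs
        · exact continuous_finset_sum _ fun j _ => (ha'' j).abs
        · exact continuous_finset_sum _ fun i _ => continuous_finset_sum _ fun j _ => (hb i j).abs
      obtain ⟨M, hM⟩ := hE.exists_bound_of_continuousOn hgc.continuousOn
      refine ⟨max M 0, le_max_right _ _, fun ξ hξ => ?_⟩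
      have h2 : |g ξ| ≤ M := by simpa using hM ξ hξ
      calc g ξ ≤ |g ξ| := le_abs_self _
        _ ≤ M := h2
        _ ≤ max M 0 := le_max_left _ _
    set δ₀ : ℝ := ℓ * A₀ + ℓ * ℓ * A₀ + 1 with hδ₀def
    have hδ₀ : 0 < δ₀ := by positivity
    -- the lattice approximation of N • κ
    set n' : ℕ → Fin d' → ℝ := fun N j => ℓ * ((round ((N : ℝ) * κ' j / ℓ) : ℤ) : ℝ) with hn'
    set n'' : ℕ → Fin d'' → ℝ := fun N j => ℓ * ((round ((N : ℝ) * κ'' j / ℓ) : ℤ) : ℝ) with hn''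
    set r : ℕ → ℝ := fun N => Real.sqrt (∑ j, n' N j ^ 2 + ∑ j, n'' N j ^ 2) with hr
    have he'b : ∀ N j, |n' N j - (N : ℝ) * κ' j| ≤ ℓ := fun N j => round_err ℓ hℓ _
    have he''b : ∀ N j, |n'' N j - (N : ℝ) * κ'' j| ≤ ℓ := fun N j => round_err ℓ hℓ _
    have hsums_nonneg : ∀ N : ℕ, (0 : ℝ) ≤ ∑ j, n' N j ^ 2 ∧ (0 : ℝ) ≤ ∑ j, n'' N j ^ 2 :=
      fun N => ⟨Finset.sum_nonneg fun j _ => sq_nonneg _,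
        Finset.sum_nonneg fun j _ => sq_nonneg _⟩
    have hr_ge' : ∀ N (j : Fin d'), |n' N j| ≤ r N := by
      intro N j
      have h1 : (n' N j) ^ 2 ≤ ∑ j, n' N j ^ 2 :=
        Finset.single_le_sum (fun j (_ : j ∈ Finset.univ) => sq_nonneg (n' N j))
          (Finset.mem_univ j)
      have h2 := (hsums_nonneg N).2
      calc |n' N j| = Real.sqrt ((n' N j) ^ 2) := (Real.sqrt_sq_eq_abs _).symm
        _ ≤ r N := Real.sqrt_le_sqrt (by linarith)
    have hr_ge'' : ∀ N (j : Fin d''), |n'' N j| ≤ r N := by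
      intro N j
      have h1 : (n'' N j) ^ 2 ≤ ∑ j, n'' N j ^ 2 :=
        Finset.single_le_sum (fun j (_ : j ∈ Finset.univ) => sq_nonneg (n'' N j))
          (Finset.mem_univ j)
      have h2 := (hsums_nonneg N).1
      calc |n'' N j| = Real.sqrt ((n'' N j) ^ 2) := (Real.sqrt_sq_eq_abs _).symm
        _ ≤ r N := Real.sqrt_le_sqrt (by linarith)
    -- some coordinate of κ is nonzero
    have hex : (∃ j, κ' j ≠ 0) ∨ (∃ j, κ'' j ≠ 0) := by
      by_contra h
      push_neg at h
      exact hs (by simp [h.1, h.2])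
    obtain ⟨c, hc, hrlow⟩ : ∃ c : ℝ, 0 < c ∧ ∀ N : ℕ, (N : ℝ) * c - ℓ ≤ r N := by
      rcases hex with ⟨j₀, hj⟩ | ⟨j₀, hj⟩
      · refine ⟨|κ' j₀|, abs_pos.mpr hj, fun N => ?_⟩
        have h1 := he'b N j₀
        have h2 := abs_sub_abs_le_abs_sub ((N : ℝ) * κ' j₀) (n' N j₀)
        rw [abs_sub_comm] at h2
        have h3 : |(N : ℝ) * κ' j₀| = (N : ℝ) * |κ' j₀| := by
          rw [abs_mul, Nat.abs_cast]
        have h4 := hr_ge' N j₀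
        linarith
      · refine ⟨|κ'' j₀|, abs_pos.mpr hj, fun N => ?_⟩
        have h1 := he''b N j₀
        have h2 := abs_sub_abs_le_abs_sub ((N : ℝ) * κ'' j₀) (n'' N j₀)
        rw [abs_sub_comm] at h2
        have h3 : |(N : ℝ) * κ'' j₀| = (N : ℝ) * |κ'' j₀| := by
          rw [abs_mul, Nat.abs_cast]
        have h4 := hr_ge'' N j₀
        linarith
    -- the measure bound for each N with r N large
    have hvol : ∀ N : ℕ, J₀ ≤ r N →
        volume Z ≤ ENNReal.ofReal (C * (δ₀ / r N ^ β) ^ α) := by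
      intro N hN
      have hsub : Z ⊆ {ξ ∈ E |
          Real.sqrt (((N : ℝ) * τ + ((∑ j, a' ξ j * n' N j) + ∑ j, a'' ξ j * n'' N j)) ^ 2 +
            (∑ i, ∑ j, n'' N i * b ξ i j * n'' N j) ^ 2) ≤ δ₀} := by
        rintro ξ ⟨hξE, hlin, hquad⟩
        refine ⟨hξE, ?_⟩
        exact pointwise_bound d' d'' ℓ hℓ N τ κ' (n' N) (fun j => n' N j - (N : ℝ) * κ' j)
          κ'' (n'' N) (fun j => n'' N j - (N : ℝ) * κ'' j) a' a'' b hbpsd A₀ ξ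
          (hba ξ hξE) (fun j => rfl) (fun j => rfl) (he'b N) (he''b N) hlin hquad
      calc volume Z ≤ _ := measure_mono hsub
        _ ≤ ENNReal.ofReal (C * (δ₀ / r N ^ β) ^ α) :=
          hmain δ₀ hδ₀ ((N : ℝ) * τ) (n' N) (n'' N)
            ⟨fun j => round ((N : ℝ) * κ' j / ℓ), fun j => rfl⟩
            ⟨fun j => round ((N : ℝ) * κ'' j / ℓ), fun j => rfl⟩ hN
    exact limit_zero Z r c ℓ δ₀ C J₀ α β hc hα hβ hrlow hvol
end

section
/- Let d = d' + d'' with d', d'' ≥ 1 and write κ = (κ', κ'') ∈ ℝ^{d'} × ℝ^{d''}. Let E ⊂ ℝ be measurable, let a = (a', a'') : ℝ → ℝ^{d'} × ℝ^{d''} be measurable, let b : ℝ → ℝ^{d''×d''} be measurable with b(ξ) symmetric for every ξ, and let θ : ℝ → ℝ be measurable with θ(ξ) > 0 for almost every ξ and θ(ξ)² |ζ|² ≤ ζᵀ b(ξ) ζ for almost every ξ ∈ ℝ and all ζ ∈ ℝ^{d''}. If for every (τ, κ) ∈ ℝ × ℝ^d with τ² + |κ|² = 1 the set { ξ ∈ E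 : |τ + a(ξ)·κ|² + (κ''ᵀ b(ξ) κ'')² = 0 } has Lebesgue measure zero, then for every such (τ, κ) the set { ξ ∈ E : |τ + a'(ξ)·κ'|² + (κ''ᵀ b(ξ) κ'')² = 0 } also has Lebesgue measure zero. -/
open MeasureTheory

/-- **Reduction of the nondegeneracy condition to the hyperbolic variables.**
Write `κ = (κ', κ'') ∈ ℝ^{d'} × ℝ^{d''}` and `a = (a', a'')`.  Let `b(ξ)` be symmetric
with `θ(ξ)²|ζ|² ≤ ζᵀ b(ξ) ζ` for a.e. `ξ` and all `ζ`, where `θ > 0` a.e.  If for every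
unit vector `(τ,κ)` the set `{ξ ∈ E : |τ + a(ξ)·κ|² + (κ''ᵀ b(ξ) κ'')² = 0}` is
Lebesgue null, then so is `{ξ ∈ E : |τ + a'(ξ)·κ'|² + (κ''ᵀ b(ξ) κ'')² = 0}` for every
unit vector `(τ,κ)`. -/
theorem nondegeneracy_reduction
    (d' d'' : ℕ) (hd' : 1 ≤ d') (hd'' : 1 ≤ d'')
    (E : Set ℝ) (hE : MeasurableSet E)
    (a' : ℝ → Fin d' → ℝ) (a'' : ℝ → Fin d'' → ℝ)
    (b : ℝ → Matrix (Fin d'') (Fin d'') ℝ) (θ : ℝ → ℝ)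
    (ha' : ∀ j, Measurable fun ξ => a' ξ j)
    (ha'' : ∀ j, Measurable fun ξ => a'' ξ j)
    (hb : ∀ i j, Measurable fun ξ => b ξ i j)
    (hθ : Measurable θ)
    (hbsymm : ∀ ξ : ℝ, (b ξ).IsSymm)
    (hθpos : ∀ᵐ ξ : ℝ, 0 < θ ξ)
    (hlower : ∀ᵐ ξ : ℝ, ∀ ζ : Fin d'' → ℝ,
      θ ξ ^ 2 * ∑ j, ζ j ^ 2 ≤ ∑ i, ∑ j, ζ i * b ξ i j * ζ j)
    (hyp : ∀ τ : ℝ, ∀ κ' : Fin d' → ℝ, ∀ κ'' : Fin d'' → ℝ,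
      τ ^ 2 + ((∑ j, κ' j ^ 2) + ∑ j, κ'' j ^ 2) = 1 →
      volume {ξ ∈ E |
        (τ + ((∑ j, a' ξ j * κ' j) + ∑ j, a'' ξ j * κ'' j)) ^ 2 +
          (∑ i, ∑ j, κ'' i * b ξ i j * κ'' j) ^ 2 = 0} = 0) :
    ∀ τ : ℝ, ∀ κ' : Fin d' → ℝ, ∀ κ'' : Fin d'' → ℝ,
      τ ^ 2 + ((∑ j, κ' j ^ 2) + ∑ j, κ'' j ^ 2) = 1 →
      volume {ξ ∈ E |
        (τ + ∑ j, a' ξ j * κ' j) ^ 2 +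
          (∑ i, ∑ j, κ'' i * b ξ i j * κ'' j) ^ 2 = 0} = 0 := by
  intro τ κ' κ'' hunit
  by_cases hκ : κ'' = 0
  · subst hκ
    have h := hyp τ κ' 0 (by simpa using hunit)
    simpa using h
  · have hκpos : 0 < ∑ j, κ'' j ^ 2 := by
      obtain ⟨j, hj⟩ : ∃ j, κ'' j ≠ 0 := by
        by_contra h; push_neg at h; exact hκ (funext h)
      exact Finset.sum_pos' (fun i _ => sq_nonneg _)
        ⟨j, Finset.mem_univ j, by positivity⟩
    rw [measure_eq_zero_iff_ae_notMem]
    filter_upwards [hθpos, hlower] with ξ hθξ hlξ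
    rintro ⟨-, heq⟩
    have h1 : 0 < θ ξ ^ 2 * ∑ j, κ'' j ^ 2 := by positivity
    have h2 := hlξ κ''
    nlinarith [sq_nonneg (τ + ∑ j, a' ξ j * κ' j),
      sq_nonneg (∑ i, ∑ j, κ'' i * b ξ i j * κ'' j)]
end

section
/- Let b ∈ C¹(ℝ) with b'(u) > 0 for almost every u ∈ ℝ, let d'' ≥ 1, and let b_{ij} : ℝ → ℝ (1 ≤ i, j ≤ d'') be continuous functions such that for every u the matrix (b_{ij}(u)) is symmetric, and such that for some constant Λ ≥ 1, for almost every u ∈ ℝ and all ξ ∈ ℝ^{d''}, b'(u)² |ξ|² ≤ Σ_{i,j} b_{ij}(u) ξ_i ξ_j ≤ Λ b'(u)² |ξ|². Define B_{ij}(u) = ∫_0^u b_{ij}(ζ) dζ. Then b is strictly increasing on ℝ, and for each pair i, j there exists a locally Lipschitz function B̃_{ij} : b(ℝ) → ℝ such that B_{ij}(u) = B̃_{ij}(b(u)) for every u ∈ ℝ. -/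
open MeasureTheory NNReal

lemma aux_bound (d : ℕ) (A : Matrix (Fin d) (Fin d) ℝ) (m Λ : ℝ) (hm : 0 ≤ m) (hΛ : 1 ≤ Λ)
    (hS : A.IsSymm)
    (h : ∀ ξ : Fin d → ℝ,
      m * ∑ j, ξ j ^ 2 ≤ ∑ i, ∑ j, ξ i * A i j * ξ j ∧
      ∑ i, ∑ j, ξ i * A i j * ξ j ≤ Λ * (m * ∑ j, ξ j ^ 2)) (i j : Fin d) :
    |A i j| ≤ Λ * m := by
  have hdiag : ∀ k : Fin d, m ≤ A k k ∧ A k k ≤ Λ * m := by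
    intro k
    have := h (fun k' => if k' = k then 1 else 0)
    simpa [ite_mul, mul_ite, Finset.sum_ite_eq', sq] using this
  rcases eq_or_ne i j with rfl | hij
  · have := hdiag i
    rw [abs_of_nonneg (hm.trans this.1)]
    exact this.2
  · have key : ∀ e : ℝ, e = 1 ∨ e = -1 →
        m * (1 + e ^ 2) ≤ A i i + e * A i j + e * A j i + e * e * A j j ∧
        A i i + e * A i j + e * A j i + e * e * A j j ≤ Λ * (m * (1 + e ^ 2)) := by
      intro e he
      have h1 := h (fun k' => (if k' = i then 1 else 0) + (if k' = j then e else 0))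
      have e1 : (∑ i', ∑ j', ((if i' = i then 1 else 0) + (if i' = j then e else 0)) * A i' j' *
          ((if j' = i then 1 else 0) + (if j' = j then e else 0))) =
          A i i + e * A i j + e * A j i + e * e * A j j := by
        simp [add_mul, mul_add, Finset.sum_add_distrib, ite_mul, mul_ite,
          Finset.sum_ite_eq', hij, hij.symm]
        ring
      have e2 : (∑ j', ((if j' = i then (1:ℝ) else 0) + (if j' = j then e else 0)) ^ 2)
          = 1 + e ^ 2 := by
        simp [add_sq, ite_mul, mul_ite, Finset.sum_add_distrib, Finset.sum_ite_eq', hij, hij.symm]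
      rw [e1, e2] at h1
      exact h1
    have kp := key 1 (Or.inl rfl)
    have km := key (-1) (Or.inr rfl)
    have hii := hdiag i
    have hjj := hdiag j
    rw [abs_le]
    have hsym : A j i = A i j := by rw [← hS.apply i j]
    constructor <;> nlinarith [kp.1, kp.2, km.1, km.2, hii.1, hii.2, hjj.1, hjj.2, hm]

/-- **`B` is a locally Lipschitz function of `b`.**
Let `b ∈ C¹(ℝ)` with `b' > 0` a.e., and let `(b_{ij})` be continuous symmetric matrices
satisfying `b'(u)²|ξ|² ≤ Σ b_{ij}(u) ξ_i ξ_j ≤ Λ b'(u)²|ξ|²` for a.e. `u` and all `ξ`.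
Setting `B_{ij}(u) = ∫_0^u b_{ij}(ζ) dζ`, the function `b` is strictly increasing and
there are functions `B̃_{ij}`, Lipschitz on every compact subinterval of the range of
`b`, with `B_{ij}(u) = B̃_{ij}(b(u))` for every `u`. -/
theorem parabolic_flux_locally_lipschitz_of_b
    (b : ℝ → ℝ) (hb : ContDiff ℝ 1 b)
    (hb' : ∀ᵐ u : ℝ, 0 < deriv b u)
    (d'' : ℕ) (hd'' : 1 ≤ d'')
    (bm : ℝ → Matrix (Fin d'') (Fin d'') ℝ)
    (hbmcont : ∀ i j, Continuous fun u => bm u i j)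
    (hbmsymm : ∀ u : ℝ, (bm u).IsSymm)
    (Λ : ℝ) (hΛ : 1 ≤ Λ)
    (hquad : ∀ᵐ u : ℝ, ∀ ξ : Fin d'' → ℝ,
      deriv b u ^ 2 * ∑ j, ξ j ^ 2 ≤ ∑ i, ∑ j, ξ i * bm u i j * ξ j ∧
      ∑ i, ∑ j, ξ i * bm u i j * ξ j ≤ Λ * (deriv b u ^ 2 * ∑ j, ξ j ^ 2)) :
    StrictMono b ∧
    ∀ i j : Fin d'', ∃ Bt : ℝ → ℝ,
      (∀ x y : ℝ, Set.Icc x y ⊆ Set.range b →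
        ∃ c : ℝ≥0, LipschitzOnWith c Bt (Set.Icc x y)) ∧
      ∀ u : ℝ, (∫ ζ in (0 : ℝ)..u, bm ζ i j) = Bt (b u) := by
  have hdiff : Differentiable ℝ b := hb.differentiable one_ne_zero
  have hderivcont : Continuous (deriv b) := hb.continuous_deriv le_rfl
  have hnull : (volume : Measure ℝ) {u | ¬ 0 < deriv b u} = 0 := hb'
  -- deriv b is nonnegative everywhere
  have hnn : ∀ u, 0 ≤ deriv b u := by
    intro u
    by_contra hu
    push_neg at hu
    have hopen : IsOpen {v : ℝ | deriv b v < 0} := isOpen_lt hderivcont continuous_const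
    have hpos : 0 < (volume : Measure ℝ) {v : ℝ | deriv b v < 0} :=
      hopen.measure_pos volume ⟨u, hu⟩
    have hz : (volume : Measure ℝ) {v : ℝ | deriv b v < 0} = 0 :=
      measure_mono_null (fun v hv => not_lt.mpr (le_of_lt hv)) hnull
    exact hpos.ne' hz
  have hmono : Monotone b := monotone_of_deriv_nonneg hdiff hnn
  have hsm : StrictMono b := by
    refine hmono.strictMono_of_injective ?_
    intro x y hxy
    by_contra hne
    rcases lt_or_gt_of_ne hne with h | h
    all_goals {
      first
      | (have hlt : x < y := h; have heq : b x = b y := hxy)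
      | (have hlt : y < x := h; have heq : b y = b x := hxy.symm)
      have hconst : ∀ z ∈ Set.Ioo (min x y) (max x y), deriv b z = 0 := by
        intro z hz
        have hIoo : Set.Ioo (min x y) (max x y) ∈ nhds z := (isOpen_Ioo).mem_nhds hz
        have hev : b =ᶠ[nhds z] fun _ => b (min x y) := by
          filter_upwards [hIoo] with w hw
          have h1 : b (min x y) ≤ b w := hmono hw.1.le
          have h2 : b w ≤ b (max x y) := hmono hw.2.le
          have h3 : b (min x y) = b (max x y) := by
            rcases le_total x y with hxy' | hxy'
            · rw [min_eq_left hxy', max_eq_right hxy']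
              rcases lt_or_eq_of_le hxy' with _ | rfl
              · exact hxy
              · rfl
            · rw [min_eq_right hxy', max_eq_left hxy']
              rcases lt_or_eq_of_le hxy' with _ | rfl
              · exact hxy.symm
              · rfl
          exact le_antisymm (h3 ▸ h2) h1
        rw [hev.deriv_eq, deriv_const]
      have hsub : Set.Ioo (min x y) (max x y) ⊆ {u | ¬ 0 < deriv b u} := by
        intro z hz
        simp [hconst z hz]
      have hz0 : (volume : Measure ℝ) (Set.Ioo (min x y) (max x y)) = 0 :=
        measure_mono_null hsub hnull
      rw [Real.volume_Ioo] at hz0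
      have : min x y < max x y := min_lt_max.mpr hne
      simp only [ENNReal.ofReal_eq_zero] at hz0
      linarith }
  refine ⟨hsm, ?_⟩
  have hinj : Function.Injective b := hsm.injective
  have habs : ∀ᵐ u : ℝ, ∀ i j : Fin d'', |bm u i j| ≤ Λ * deriv b u ^ 2 := by
    filter_upwards [hquad] with u hu i j
    exact aux_bound d'' (bm u) (deriv b u ^ 2) Λ (sq_nonneg _) hΛ (hbmsymm u) hu i j
  intro i j
  set g : ℝ → ℝ := Function.invFun b with hg
  have hgb : ∀ u, g (b u) = u := Function.leftInverse_invFun hinj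
  refine ⟨fun s => ∫ ζ in (0 : ℝ)..(g s), bm ζ i j, ?_, fun u => by simp only [hgb u]⟩
  intro x y hsub
  by_cases hxy : x ≤ y
  · -- nonempty interval
    obtain ⟨p, hp⟩ := hsub ⟨le_refl x, hxy⟩
    obtain ⟨q, hq⟩ := hsub ⟨hxy, le_refl y⟩
    have hpq : p ≤ q := hsm.le_iff_le.mp (by rw [hp, hq]; exact hxy)
    -- bound for deriv b on Icc p q
    obtain ⟨M, hM⟩ : ∃ M, ∀ z ∈ Set.Icc p q, deriv b z ≤ M := by
      obtain ⟨M, hM⟩ := (isCompact_Icc (a := p) (b := q)).exists_bound_of_continuousOn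
        hderivcont.continuousOn
      exact ⟨M, fun z hz => (le_abs_self _).trans (by simpa using hM z hz)⟩
    have hM0 : 0 ≤ M := (hnn p).trans (hM p ⟨le_refl p, hpq⟩)
    have hΛ0 : (0:ℝ) < Λ := lt_of_lt_of_le one_pos hΛ
    have hC0 : 0 ≤ Λ * M := mul_nonneg hΛ0.le hM0
    -- facts about g on Icc x y
    have hgmem : ∀ s ∈ Set.Icc x y, b (g s) = s ∧ g s ∈ Set.Icc p q := by
      intro s hs
      have hbs : b (g s) = s := Function.invFun_eq (hsub hs)
      refine ⟨hbs, ?_, ?_⟩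
      · exact hsm.le_iff_le.mp (by rw [hp, hbs]; exact hs.1)
      · exact hsm.le_iff_le.mp (by rw [hq, hbs]; exact hs.2)
    have key : ∀ s ∈ Set.Icc x y, ∀ t ∈ Set.Icc x y, t ≤ s →
        |(∫ ζ in (0:ℝ)..(g s), bm ζ i j) - ∫ ζ in (0:ℝ)..(g t), bm ζ i j|
          ≤ Λ * M * (s - t) := by
      intro s hs t ht hts
      obtain ⟨hbs, hgs⟩ := hgmem s hs
      obtain ⟨hbt, hgt⟩ := hgmem t ht
      have hgts : g t ≤ g s := hsm.le_iff_le.mp (by rw [hbs, hbt]; exact hts)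
      have hint1 : IntervalIntegrable (fun ζ => bm ζ i j) volume 0 (g s) :=
        (hbmcont i j).intervalIntegrable _ _
      have hint2 : IntervalIntegrable (fun ζ => bm ζ i j) volume 0 (g t) :=
        (hbmcont i j).intervalIntegrable _ _
      have hsplit : (∫ ζ in (0:ℝ)..(g s), bm ζ i j) - ∫ ζ in (0:ℝ)..(g t), bm ζ i j
          = ∫ ζ in (g t)..(g s), bm ζ i j :=
        intervalIntegral.integral_interval_sub_left hint1 hint2
      rw [hsplit]
      have step1 : |∫ ζ in (g t)..(g s), bm ζ i j| ≤ ∫ ζ in (g t)..(g s), |bm ζ i j| :=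
        intervalIntegral.abs_integral_le_integral_abs hgts
      have step2 : (∫ ζ in (g t)..(g s), |bm ζ i j|)
          ≤ ∫ ζ in (g t)..(g s), Λ * deriv b ζ ^ 2 := by
        apply intervalIntegral.integral_mono_ae hgts
          ((hbmcont i j).abs.intervalIntegrable _ _)
          ((continuous_const.mul (hderivcont.pow 2)).intervalIntegrable _ _)
        filter_upwards [habs] with ζ hζ
        exact hζ i j
      have step3 : (∫ ζ in (g t)..(g s), Λ * deriv b ζ ^ 2)
          ≤ ∫ ζ in (g t)..(g s), Λ * M * deriv b ζ := by
        apply intervalIntegral.integral_mono_on hgts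
          ((continuous_const.mul (hderivcont.pow 2)).intervalIntegrable _ _)
          ((continuous_const.mul hderivcont).intervalIntegrable _ _)
        intro z hz
        have hzpq : z ∈ Set.Icc p q := ⟨hgt.1.trans hz.1, hz.2.trans hgs.2⟩
        have h1 := hnn z
        have h2 := hM z hzpq
        have h3 : deriv b z ^ 2 ≤ M * deriv b z := by nlinarith
        calc Λ * deriv b z ^ 2 ≤ Λ * (M * deriv b z) :=
              mul_le_mul_of_nonneg_left h3 hΛ0.le
          _ = Λ * M * deriv b z := by ring
      have step4 : (∫ ζ in (g t)..(g s), Λ * M * deriv b ζ) = Λ * M * (s - t) := by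
        rw [intervalIntegral.integral_const_mul,
          intervalIntegral.integral_deriv_eq_sub (fun z _ => hdiff z)
            (hderivcont.intervalIntegrable _ _), hbs, hbt]
      linarith [step1, step2, step3, step4.le, step4.ge]
    refine ⟨(Λ * M).toNNReal, LipschitzOnWith.of_dist_le_mul ?_⟩
    intro s hs t ht
    rw [Real.dist_eq, Real.dist_eq, Real.coe_toNNReal _ hC0]
    rcases le_total t s with hts | hst
    · rw [abs_of_nonneg (by linarith : (0:ℝ) ≤ s - t)]
      exact key s hs t ht hts
    · rw [abs_sub_comm,
        show |s - t| = t - s by rw [abs_sub_comm]; exact abs_of_nonneg (by linarith)]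
      exact key t ht s hs hst
  · refine ⟨0, ?_⟩
    rw [Set.Icc_eq_empty hxy]
    exact lipschitzOnWith_empty _ _
end

section
/- Let b ∈ C¹(ℝ) with b'(u) > 0 for almost every u ∈ ℝ, let d'' ≥ 1 and Λ ≥ 1, and let σ_{ij} : ℝ → ℝ (1 ≤ i, j ≤ d'') be continuous functions such that for every u the matrix (σ_{ij}(u)) is symmetric positive semidefinite and, for almost every u ∈ ℝ and all ξ ∈ ℝ^{d''}, b'(u) |ξ|² ≤ Σ_{i,j} σ_{ij}(u) ξ_i ξ_j ≤ Λ^{1/2} b'(u) |ξ|². Define Σ_{ij}(u) = ∫_0^u σ_{ij}(ζ) dζ. Then for each pair i, j there exists a Lipschitz function Σ̃_{ij} : b(ℝ) → ℝ, with Lipschitz constant at most Λ^{1/2}, such that Σ_{ij}(u) = Σ̃_{ij}(b(u)) for all u ∈ ℝ. -/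
open MeasureTheory NNReal

/-- **`Σ` is a Lipschitz function of `b`, with constant at most `Λ^{1/2}`.**
Let `b ∈ C¹(ℝ)` with `b' > 0` a.e., and let `(σ_{ij})` be continuous symmetric positive
semidefinite matrices satisfying `b'(u)|ξ|² ≤ Σ σ_{ij}(u) ξ_i ξ_j ≤ Λ^{1/2} b'(u)|ξ|²`
for a.e. `u` and all `ξ`.  Setting `Σ_{ij}(u) = ∫_0^u σ_{ij}(ζ) dζ`, there exist
functions `Σ̃_{ij}`, Lipschitz on the range of `b` with Lipschitz constant at most
`Λ^{1/2}`, such that `Σ_{ij}(u) = Σ̃_{ij}(b(u))` for all `u`. -/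
theorem sigma_lipschitz_of_b
    (b : ℝ → ℝ) (hb : ContDiff ℝ 1 b)
    (hb' : ∀ᵐ u : ℝ, 0 < deriv b u)
    (d'' : ℕ) (hd'' : 1 ≤ d'') (Λ : ℝ) (hΛ : 1 ≤ Λ)
    (σm : ℝ → Matrix (Fin d'') (Fin d'') ℝ)
    (hσcont : ∀ i j, Continuous fun u => σm u i j)
    (hσpsd : ∀ u : ℝ, (σm u).PosSemidef)
    (hquad : ∀ᵐ u : ℝ, ∀ ξ : Fin d'' → ℝ,
      deriv b u * ∑ j, ξ j ^ 2 ≤ ∑ i, ∑ j, ξ i * σm u i j * ξ j ∧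
      ∑ i, ∑ j, ξ i * σm u i j * ξ j ≤ Real.sqrt Λ * (deriv b u * ∑ j, ξ j ^ 2)) :
    ∀ i j : Fin d'', ∃ St : ℝ → ℝ,
      LipschitzOnWith (Real.toNNReal (Real.sqrt Λ)) St (Set.range b) ∧
      ∀ u : ℝ, (∫ ζ in (0 : ℝ)..u, σm ζ i j) = St (b u) := by
  have hΛ1 : (1 : ℝ) ≤ Real.sqrt Λ := Real.one_le_sqrt.mpr hΛ
  have hΛ0 : (0 : ℝ) ≤ Real.sqrt Λ := le_trans zero_le_one hΛ1
  have hderiv_cont : Continuous (deriv b) := hb.continuous_deriv le_rfl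
  intro i j
  -- symmetry
  have hsym : ∀ u : ℝ, σm u j i = σm u i j := fun u => (hσpsd u).isHermitian.apply i j
  -- pointwise a.e. bound `|σ_{ij}| ≤ √Λ * b'`
  have hbound : ∀ᵐ u : ℝ, |σm u i j| ≤ Real.sqrt Λ * deriv b u := by
    filter_upwards [hb', hquad] with u hu hq
    have hsingle : ∀ k : Fin d'',
        deriv b u ≤ σm u k k ∧ σm u k k ≤ Real.sqrt Λ * deriv b u := by
      intro k
      have h := hq (Pi.single k 1)
      simpa [Pi.single_apply] using h
    by_cases hij : i = j
    · subst hij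
      rcases hsingle i with ⟨h1, h2⟩
      rw [abs_le]
      constructor
      · nlinarith
      · exact h2
    · have hp := hq (((Pi.single i 1 : Fin d'' → ℝ) + (Pi.single j 1 : Fin d'' → ℝ)))
      have hm := hq (((Pi.single i 1 : Fin d'' → ℝ) - (Pi.single j 1 : Fin d'' → ℝ)))
      have hquadp : ∑ i', ∑ j',
          (((Pi.single i 1 : Fin d'' → ℝ) + (Pi.single j 1 : Fin d'' → ℝ))) i' * σm u i' j' *
          (((Pi.single i 1 : Fin d'' → ℝ) + (Pi.single j 1 : Fin d'' → ℝ))) j'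
          = σm u i i + σm u j j + 2 * σm u i j := by
        simp only [Pi.add_apply, Pi.single_apply, add_mul, mul_add, Finset.sum_add_distrib,
          ite_mul, mul_ite, one_mul, mul_one, zero_mul, mul_zero]
        simp [hij, Ne.symm hij, hsym u, Finset.sum_add_distrib, Finset.sum_sub_distrib,
          Finset.sum_ite_eq, Finset.sum_ite_eq']
        ring
      have hquadm : ∑ i', ∑ j',
          (((Pi.single i 1 : Fin d'' → ℝ) - (Pi.single j 1 : Fin d'' → ℝ))) i' * σm u i' j' *
          (((Pi.single i 1 : Fin d'' → ℝ) - (Pi.single j 1 : Fin d'' → ℝ))) j'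
          = σm u i i + σm u j j - 2 * σm u i j := by
        simp only [Pi.sub_apply, Pi.single_apply, sub_mul, mul_sub, Finset.sum_sub_distrib,
          ite_mul, mul_ite, one_mul, mul_one, zero_mul, mul_zero]
        simp [hij, Ne.symm hij, hsym u, Finset.sum_add_distrib, Finset.sum_sub_distrib,
          Finset.sum_ite_eq, Finset.sum_ite_eq']
        ring
      have hnormp : ∑ k, (((Pi.single i 1 : Fin d'' → ℝ) + (Pi.single j 1 : Fin d'' → ℝ))) k ^ 2
          = 2 := by
        simp only [Pi.add_apply, Pi.single_apply, add_sq, Finset.sum_add_distrib]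
        simp [hij, Ne.symm hij, Finset.mul_sum, ite_mul, mul_ite]
        norm_num
      have hnormm : ∑ k, (((Pi.single i 1 : Fin d'' → ℝ) - (Pi.single j 1 : Fin d'' → ℝ))) k ^ 2
          = 2 := by
        simp only [Pi.sub_apply, Pi.single_apply, sub_sq, Finset.sum_add_distrib,
          Finset.sum_sub_distrib]
        simp [hij, Ne.symm hij, Finset.mul_sum, ite_mul, mul_ite]
        norm_num
      rcases hsingle i with ⟨hii, _⟩
      rcases hsingle j with ⟨hjj, _⟩
      have hp2 := hp.2; have hm2 := hm.2
      rw [hquadp, hnormp] at hp2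
      rw [hquadm, hnormm] at hm2
      rw [abs_le]
      constructor <;> nlinarith
  -- integrability
  have hσint : ∀ a c : ℝ, IntervalIntegrable (fun ζ => σm ζ i j) volume a c :=
    fun a c => ((hσcont i j).intervalIntegrable a c)
  have hσabsint : ∀ a c : ℝ, IntervalIntegrable (fun ζ => |σm ζ i j|) volume a c :=
    fun a c => ((hσcont i j).abs.intervalIntegrable a c)
  have hbint : ∀ a c : ℝ, IntervalIntegrable (fun ζ => Real.sqrt Λ * deriv b ζ) volume a c :=
    fun a c => ((continuous_const.mul hderiv_cont).intervalIntegrable a c)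
  have hftc : ∀ a c : ℝ, (∫ ζ in a..c, deriv b ζ) = b c - b a := fun a c =>
    intervalIntegral.integral_deriv_eq_sub (fun x _ => hb.differentiable one_ne_zero x)
      (hderiv_cont.intervalIntegrable a c)
  -- monotonicity of b
  have hmono : ∀ u v : ℝ, u ≤ v → b u ≤ b v := by
    intro u v huv
    have h0 : 0 ≤ ∫ ζ in u..v, deriv b ζ :=
      intervalIntegral.integral_nonneg_of_ae huv (hb'.mono fun x hx => hx.le)
    linarith [hftc u v]
  -- the key estimate, ordered version
  have key : ∀ u v : ℝ, u ≤ v →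
      |∫ ζ in u..v, σm ζ i j| ≤ Real.sqrt Λ * (b v - b u) := by
    intro u v huv
    calc |∫ ζ in u..v, σm ζ i j| ≤ ∫ ζ in u..v, |σm ζ i j| :=
          intervalIntegral.abs_integral_le_integral_abs huv
      _ ≤ ∫ ζ in u..v, Real.sqrt Λ * deriv b ζ :=
          intervalIntegral.integral_mono_ae huv (hσabsint u v) (hbint u v) hbound
      _ = Real.sqrt Λ * (b v - b u) := by
          rw [intervalIntegral.integral_const_mul, hftc u v]
  -- the key estimate, general version
  have key2 : ∀ u v : ℝ,
      |(∫ ζ in (0:ℝ)..v, σm ζ i j) - ∫ ζ in (0:ℝ)..u, σm ζ i j|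
        ≤ Real.sqrt Λ * |b v - b u| := by
    intro u v
    rcases le_total u v with h | h
    · rw [intervalIntegral.integral_interval_sub_left (hσint 0 v) (hσint 0 u)]
      have := key u v h
      rw [abs_of_nonneg (sub_nonneg.mpr (hmono u v h))]
      exact this
    · rw [intervalIntegral.integral_interval_sub_left (hσint 0 v) (hσint 0 u),
        ← abs_neg, ← intervalIntegral.integral_symm]
      have := key v u h
      rw [abs_sub_comm (b v), abs_of_nonneg (sub_nonneg.mpr (hmono v u h))]
      exact this
  -- define `St`
  refine ⟨fun y => ∫ ζ in (0:ℝ)..(Function.invFun b y), σm ζ i j, ?_, ?_⟩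
  · rw [lipschitzOnWith_iff_dist_le_mul]
    rintro x ⟨u, hu⟩ y ⟨v, hv⟩
    have hx : b (Function.invFun b x) = x := Function.invFun_eq ⟨u, hu⟩
    have hy : b (Function.invFun b y) = y := Function.invFun_eq ⟨v, hv⟩
    rw [Real.dist_eq, Real.dist_eq, Real.coe_toNNReal _ hΛ0]
    have := key2 (Function.invFun b y) (Function.invFun b x)
    rw [hx, hy] at this
    exact this
  · intro u
    have hw : b (Function.invFun b (b u)) = b u := Function.invFun_eq ⟨u, rfl⟩
    have := key2 u (Function.invFun b (b u))
    rw [hw, sub_self, abs_zero, mul_zero, abs_nonpos_iff, sub_eq_zero] at this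
    exact this.symm
end
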